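/- arXiv:1012.4054 — 4 statements merged into one kernel-verified Lean document; each statement's English description precedes it below -/
import Mathlib

section
/- If x = (x_2, ..., x_n) and y = (y_2, ..., y_n) are integer vectors with 0 ≤ x_ℓ ≤ ℓ-1 and 0 ≤ y_ℓ ≤ ℓ-1 for all 2 ≤ ℓ ≤ n, and x_ℓ ≤ y_ℓ for all ℓ, then ω(x) ≤ ω(y) in Bruhat order on S_n. -/
open Equiv Finset
open Fin.NatCast

/-- The simple transposition `s_i = (i, i+1)` (1-indexed letters), as a
permutation of `Fin n` (0-indexed letters `i-1`, `i`). -/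
def sT (n : ℕ) [NeZero n] (i : ℕ) : Equiv.Perm (Fin n) :=
  Equiv.swap (Fin.ofNat n (i - 1 : ℕ)) (Fin.ofNat n (i : ℕ))

/-- The Bruhat length of a permutation: its number of inversions. -/
def lenP (n : ℕ) (w : Equiv.Perm (Fin n)) : ℕ :=
  (Finset.univ.filter (fun p : Fin n × Fin n => p.1 < p.2 ∧ w p.2 < w p.1)).card

/-- Bruhat order on `S_n`: the reflexive-transitive closure of
"multiply on the right by a transposition and increase length". -/
def bruhatLE (n : ℕ) (u w : Equiv.Perm (Fin n)) : Prop :=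
  Relation.ReflTransGen
    (fun a b => (∃ i j : Fin n, i ≠ j ∧ b = a * Equiv.swap i j) ∧ lenP n a < lenP n b) u w

/-- `u_ℓ(x) = s_{ℓ-1} s_{ℓ-2} ⋯ s_{ℓ-x_ℓ}` (identity if `x_ℓ = 0`). -/
def uPerm (n : ℕ) [NeZero n] (ℓ m : ℕ) : Equiv.Perm (Fin n) :=
  ((List.range m).map (fun t => sT n (ℓ - 1 - t))).prod

/-- `ω(x) = u_2(x) u_3(x) ⋯ u_n(x)`. -/
def omegaPerm (n : ℕ) [NeZero n] (x : ℕ → ℕ) : Equiv.Perm (Fin n) :=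
  ((List.range (n - 1)).map (fun k => uPerm n (k + 2) (x (k + 2)))).prod


lemma fin_ne_of_val_ne {n : ℕ} {a b : Fin n} (h : (a:ℕ) ≠ (b:ℕ)) : a ≠ b :=
  fun e => h (by rw [e])

lemma adj_swap_lt {n : ℕ} {a b p q : Fin n} (hab : (a:ℕ)+1 = (b:ℕ)) (hpq : p < q)
    (hne : ¬(p = a ∧ q = b)) : Equiv.swap a b p < Equiv.swap a b q := by
  rw [Fin.lt_def] at hpq ⊢
  rcases eq_or_ne p a with rfl | hpa
  · have hqb : q ≠ b := fun h => hne ⟨rfl, h⟩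
    have hqa : q ≠ p := fun h => by rw [h] at hpq; omega
    rw [Equiv.swap_apply_left, Equiv.swap_apply_of_ne_of_ne hqa hqb]
    have h1 : (q:ℕ) ≠ (b:ℕ) := fun h => hqb (Fin.ext h)
    omega
  · rcases eq_or_ne p b with rfl | hpb
    · have hqb : q ≠ p := fun h => by rw [h] at hpq; omega
      have hqa : q ≠ a := fun h => by rw [h] at hpq; omega
      rw [Equiv.swap_apply_right, Equiv.swap_apply_of_ne_of_ne hqa hqb]
      omega
    · rw [Equiv.swap_apply_of_ne_of_ne hpa hpb]
      have h1 : (p:ℕ) ≠ (a:ℕ) := fun h => hpa (Fin.ext h)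
      have h2 : (p:ℕ) ≠ (b:ℕ) := fun h => hpb (Fin.ext h)
      rcases eq_or_ne q a with rfl | hqa
      · rw [Equiv.swap_apply_left]; omega
      · rcases eq_or_ne q b with rfl | hqb
        · rw [Equiv.swap_apply_right]; omega
        · rw [Equiv.swap_apply_of_ne_of_ne hqa hqb]; omega

lemma lenP_mul_adj_swap {n : ℕ} (w : Equiv.Perm (Fin n)) (a b : Fin n)
    (hab : (a:ℕ)+1 = (b:ℕ)) (h : w a < w b) :
    lenP n (w * Equiv.swap a b) = lenP n w + 1 := by
  classical
  have hsa : Equiv.swap a b a = b := Equiv.swap_apply_left a b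
  have hsb : Equiv.swap a b b = a := Equiv.swap_apply_right a b
  have hss : ∀ v, Equiv.swap a b (Equiv.swap a b v) = v := fun v => Equiv.swap_apply_self a b v
  have haltb : a < b := by rw [Fin.lt_def]; omega
  have key : (Finset.univ.filter fun p : Fin n × Fin n =>
        p.1 < p.2 ∧ (w * Equiv.swap a b) p.2 < (w * Equiv.swap a b) p.1)
      = insert (a, b) ((Finset.univ.filter fun p : Fin n × Fin n => p.1 < p.2 ∧ w p.2 < w p.1).image
          fun p => (Equiv.swap a b p.1, Equiv.swap a b p.2)) := by
    ext ⟨p, q⟩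
    rw [Finset.mem_filter]
    simp only [Finset.mem_insert, Finset.mem_image, Finset.mem_filter, Finset.mem_univ,
      true_and, Prod.mk.injEq, Prod.exists, Equiv.Perm.mul_apply]
    constructor
    · rintro ⟨h1, h2⟩
      by_cases hpq : p = a ∧ q = b
      · exact Or.inl ⟨hpq.1, hpq.2⟩
      · exact Or.inr ⟨Equiv.swap a b p, Equiv.swap a b q,
          ⟨adj_swap_lt hab h1 hpq, h2⟩, hss p, hss q⟩
    · rintro (⟨rfl, rfl⟩ | ⟨p', q', ⟨h1, h2⟩, hp, hq⟩)
      · exact ⟨haltb, by rw [hsb, hsa]; exact h⟩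
      · rw [← hp, ← hq]
        constructor
        · apply adj_swap_lt hab h1
          rintro ⟨rfl, rfl⟩
          exact absurd h2 (not_lt.mpr (le_of_lt h))
        · rw [hss, hss]; exact h2
  have hnotmem : (a, b) ∉ ((Finset.univ.filter fun p : Fin n × Fin n =>
      p.1 < p.2 ∧ w p.2 < w p.1).image fun p => (Equiv.swap a b p.1, Equiv.swap a b p.2)) := by
    intro hm
    simp only [Finset.mem_image, Finset.mem_filter, Finset.mem_univ, true_and,
      Prod.mk.injEq, Prod.exists] at hm
    obtain ⟨p', q', ⟨h1, _⟩, hp, hq⟩ := hm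
    have hp' : p' = b := by rw [← hss p', hp, hsa]
    have hq' : q' = a := by rw [← hss q', hq, hsb]
    rw [hp', hq'] at h1
    exact absurd haltb (not_lt.mpr (le_of_lt h1))
  have hinj : Function.Injective (fun p : Fin n × Fin n => (Equiv.swap a b p.1, Equiv.swap a b p.2)) := by
    intro u v huv
    simp only [Prod.mk.injEq] at huv
    exact Prod.ext ((Equiv.swap a b).injective huv.1) ((Equiv.swap a b).injective huv.2)
  unfold lenP
  rw [key, Finset.card_insert_of_notMem hnotmem, Finset.card_image_of_injective _ hinj]

lemma lenP_one {n : ℕ} : lenP n 1 = 0 := by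
  unfold lenP
  rw [Finset.card_eq_zero, Finset.filter_eq_empty_iff]
  rintro ⟨p, q⟩ _
  simp only [Equiv.Perm.one_apply, not_and, not_lt]
  exact fun h => le_of_lt h

lemma uPerm_zero {n : ℕ} [NeZero n] (ℓ : ℕ) : uPerm n ℓ 0 = 1 := rfl

lemma uPerm_succ {n : ℕ} [NeZero n] (ℓ m : ℕ) :
    uPerm n ℓ (m+1) = uPerm n ℓ m * sT n (ℓ - 1 - m) := by
  unfold uPerm
  rw [List.range_succ, List.map_append, List.prod_append, List.map_singleton,
    List.prod_singleton]

lemma uPerm_fix_high {n : ℕ} [NeZero n] {ℓ m : ℕ} (hℓn : ℓ ≤ n) (hm : m ≤ ℓ - 1)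
    (v : Fin n) (hv : ℓ ≤ (v:ℕ)) : uPerm n ℓ m v = v := by
  induction m with
  | zero => rfl
  | succ m ih =>
    rw [uPerm_succ, Equiv.Perm.mul_apply]
    have hv1 : sT n (ℓ - 1 - m) v = v := by
      unfold sT; simp only [Fin.ofNat_eq_cast]
      apply Equiv.swap_apply_of_ne_of_ne <;>
      · apply fin_ne_of_val_ne
        rw [Fin.val_natCast, Nat.mod_eq_of_lt (by omega)]
        omega
    rw [hv1]
    exact ih (by omega)

lemma uPerm_fix_low {n : ℕ} [NeZero n] {ℓ m : ℕ} (hℓn : ℓ ≤ n)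
    (v : Fin n) (hv : (v:ℕ) < ℓ - 1 - m) : uPerm n ℓ m v = v := by
  induction m with
  | zero => rfl
  | succ m ih =>
    rw [uPerm_succ, Equiv.Perm.mul_apply]
    have hv1 : sT n (ℓ - 1 - m) v = v := by
      unfold sT; simp only [Fin.ofNat_eq_cast]
      apply Equiv.swap_apply_of_ne_of_ne <;>
      · apply fin_ne_of_val_ne
        rw [Fin.val_natCast, Nat.mod_eq_of_lt (by omega)]
        omega
    rw [hv1]
    exact ih (by omega)

lemma uPerm_apply_top {n : ℕ} [NeZero n] {ℓ m : ℕ} (hℓ2 : 2 ≤ ℓ) (hℓn : ℓ ≤ n) (hm : m ≤ ℓ - 1) :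
    uPerm n ℓ m (((ℓ - 1 - m : ℕ) : Fin n)) = ((ℓ - 1 : ℕ) : Fin n) := by
  induction m with
  | zero => rfl
  | succ m ih =>
    rw [uPerm_succ, Equiv.Perm.mul_apply]
    have harg : sT n (ℓ - 1 - m) (((ℓ - 1 - (m+1) : ℕ) : Fin n)) = ((ℓ - 1 - m : ℕ) : Fin n) := by
      unfold sT; simp only [Fin.ofNat_eq_cast]
      have : ℓ - 1 - m - 1 = ℓ - 1 - (m + 1) := by omega
      rw [this]
      exact Equiv.swap_apply_left _ _
    rw [harg]
    exact ih (by omega)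

def preP (n : ℕ) [NeZero n] (z : ℕ → ℕ) (j : ℕ) : Equiv.Perm (Fin n) :=
  ((List.range j).map (fun k => uPerm n (k + 2) (z (k + 2)))).prod

lemma preP_succ {n : ℕ} [NeZero n] (z : ℕ → ℕ) (j : ℕ) :
    preP n z (j+1) = preP n z j * uPerm n (j + 2) (z (j + 2)) := by
  unfold preP
  rw [List.range_succ, List.map_append, List.prod_append, List.map_singleton,
    List.prod_singleton]

lemma preP_fix_high {n : ℕ} [NeZero n] {z : ℕ → ℕ}
    (hz : ∀ ℓ, 2 ≤ ℓ → ℓ ≤ n → z ℓ ≤ ℓ - 1) {j : ℕ} (hj : j + 1 ≤ n)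
    (v : Fin n) (hv : j + 1 ≤ (v:ℕ)) : preP n z j v = v := by
  induction j with
  | zero => rfl
  | succ j ih =>
    rw [preP_succ, Equiv.Perm.mul_apply]
    rw [uPerm_fix_high (by omega) (hz (j+2) (by omega) (by omega)) v (by omega)]
    exact ih (by omega) (by omega)

lemma fix_high_maps_low {n : ℕ} (w : Equiv.Perm (Fin n)) (c : ℕ)
    (hw : ∀ v : Fin n, c ≤ (v:ℕ) → w v = v) (v : Fin n) (hv : (v:ℕ) < c) : ((w v : Fin n) : ℕ) < c := by
  by_contra hcon
  push_neg at hcon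
  have h1 : w (w v) = w v := hw (w v) hcon
  have h2 : w v = v := w.injective h1
  rw [h2] at hcon
  omega

lemma lenP_preP_mul {n : ℕ} [NeZero n] {z : ℕ → ℕ}
    (hz : ∀ ℓ, 2 ≤ ℓ → ℓ ≤ n → z ℓ ≤ ℓ - 1) {j : ℕ} (hj : j + 2 ≤ n)
    (HL : lenP n (preP n z j) = ∑ k ∈ Finset.range j, z (k + 2)) :
    ∀ m, m ≤ j + 1 → lenP n (preP n z j * uPerm n (j + 2) m)
      = (∑ k ∈ Finset.range j, z (k + 2)) + m := by
  intro m
  induction m with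
  | zero => intro _; rw [uPerm_zero, mul_one, HL, Nat.add_zero]
  | succ m ih =>
    intro hm
    have hm' : m ≤ j + 1 := by omega
    have hstep : preP n z j * uPerm n (j + 2) (m + 1)
        = (preP n z j * uPerm n (j + 2) m) * sT n (j + 1 - m) := by
      have : j + 2 - 1 - m = j + 1 - m := by omega
      rw [uPerm_succ, this, mul_assoc]
    have hmlej : m ≤ j := by omega
    have hsT : sT n (j + 1 - m) = Equiv.swap ((j - m : ℕ) : Fin n) ((j + 1 - m : ℕ) : Fin n) := by
      unfold sT; simp only [Fin.ofNat_eq_cast]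
      have : j + 1 - m - 1 = j - m := by omega
      rw [this]
    set w := preP n z j * uPerm n (j + 2) m with hw
    have hwb : w (((j + 1 - m : ℕ) : Fin n)) = ((j + 1 : ℕ) : Fin n) := by
      rw [hw, Equiv.Perm.mul_apply]
      have h1 : uPerm n (j + 2) m (((j + 2 - 1 - m : ℕ) : Fin n)) = ((j + 2 - 1 : ℕ) : Fin n) :=
        uPerm_apply_top (by omega) (by omega) (by omega)
      have e1 : j + 2 - 1 - m = j + 1 - m := by omega
      have e2 : j + 2 - 1 = j + 1 := by omega
      rw [e1, e2] at h1
      rw [h1]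
      exact preP_fix_high hz (by omega) _ (by rw [Fin.val_natCast, Nat.mod_eq_of_lt (by omega)])
    have hwa : ((w (((j - m : ℕ) : Fin n)) : Fin n) : ℕ) < j + 1 := by
      rw [hw, Equiv.Perm.mul_apply]
      have h1 : uPerm n (j + 2) m (((j - m : ℕ) : Fin n)) = ((j - m : ℕ) : Fin n) := by
        apply uPerm_fix_low (by omega)
        rw [Fin.val_natCast, Nat.mod_eq_of_lt (by omega)]
        omega
      rw [h1]
      apply fix_high_maps_low (preP n z j) (j + 1) (preP_fix_high hz (by omega))
      rw [Fin.val_natCast, Nat.mod_eq_of_lt (by omega)]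
      omega
    have hab : (((j - m : ℕ) : Fin n) : ℕ) + 1 = (((j + 1 - m : ℕ) : Fin n) : ℕ) := by
      rw [Fin.val_natCast, Fin.val_natCast, Nat.mod_eq_of_lt (by omega),
        Nat.mod_eq_of_lt (by omega)]
      omega
    have hlt : w (((j - m : ℕ) : Fin n)) < w (((j + 1 - m : ℕ) : Fin n)) := by
      rw [Fin.lt_def, hwb, Fin.val_natCast, Nat.mod_eq_of_lt (by omega)]
      exact hwa
    rw [hstep, hsT, lenP_mul_adj_swap w _ _ hab hlt, ih hm']
    omega

lemma lenP_preP {n : ℕ} [NeZero n] {z : ℕ → ℕ}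
    (hz : ∀ ℓ, 2 ≤ ℓ → ℓ ≤ n → z ℓ ≤ ℓ - 1) :
    ∀ j, j ≤ n - 1 → lenP n (preP n z j) = ∑ k ∈ Finset.range j, z (k + 2) := by
  intro j
  induction j with
  | zero => intro _; simpa [preP] using lenP_one
  | succ j ih =>
    intro hj
    have hn1 : 1 ≤ n := Nat.one_le_iff_ne_zero.mpr (NeZero.ne n)
    have hj2 : j + 2 ≤ n := by omega
    rw [preP_succ, Finset.sum_range_succ]
    exact lenP_preP_mul hz hj2 (ih (by omega)) (z (j + 2))
      (by have := hz (j + 2) (by omega) (by omega); omega)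

lemma omegaPerm_eq_preP {n : ℕ} [NeZero n] (x : ℕ → ℕ) :
    omegaPerm n x = preP n x (n - 1) := rfl

lemma lenP_omega {n : ℕ} [NeZero n] {z : ℕ → ℕ}
    (hz : ∀ ℓ, 2 ≤ ℓ → ℓ ≤ n → z ℓ ≤ ℓ - 1) :
    lenP n (omegaPerm n z) = ∑ k ∈ Finset.range (n - 1), z (k + 2) := by
  rw [omegaPerm_eq_preP]
  exact lenP_preP hz (n - 1) le_rfl

lemma prod_mul_mid {n : ℕ} {N k0 : ℕ} (hk : k0 < N) (F : ℕ → Equiv.Perm (Fin n))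
    (s : Equiv.Perm (Fin n)) :
    ∃ C : Equiv.Perm (Fin n),
      ((List.range N).map (fun k => if k = k0 then F k * s else F k)).prod
        = ((List.range N).map F).prod * (C⁻¹ * s * C) := by
  obtain ⟨d, rfl⟩ : ∃ d, N = k0 + 1 + d := ⟨N - (k0 + 1), by omega⟩
  rw [List.range_add, List.range_succ]
  simp only [List.map_append, List.prod_append, List.map_map, List.map_singleton,
    List.prod_singleton, if_pos rfl]
  have hpre : (List.range k0).map (fun k => if k = k0 then F k * s else F k)
      = (List.range k0).map F := by
    apply List.map_congr_left
    intro k hk'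
    rw [List.mem_range] at hk'
    simp [Nat.ne_of_lt hk']
  rw [hpre]
  have hC1 : List.map ((fun k => if k = k0 then F k * s else F k) ∘ fun x => k0 + 1 + x)
      (List.range d) = List.map (F ∘ fun x => k0 + 1 + x) (List.range d) :=
    List.map_congr_left (fun t _ => by
      simp only [Function.comp_apply]; rw [if_neg (by omega)])
  rw [hC1]
  refine ⟨(List.map (F ∘ fun x => k0 + 1 + x) (List.range d)).prod, ?_⟩
  simp only [if_true]
  group

lemma sum_update_add_one {N k0 : ℕ} (hk : k0 < N) (f : ℕ → ℕ) :
    ∑ k ∈ Finset.range N, (Function.update f (k0+2) (f (k0+2) + 1)) (k + 2)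
      = (∑ k ∈ Finset.range N, f (k + 2)) + 1 := by
  have hmem : k0 ∈ Finset.range N := Finset.mem_range.mpr hk
  rw [← Finset.add_sum_erase _ _ hmem, ← Finset.add_sum_erase _ (fun k => f (k+2)) hmem]
  have h2 : ∑ k ∈ (Finset.range N).erase k0,
      (Function.update f (k0+2) (f (k0+2) + 1)) (k + 2) = ∑ k ∈ (Finset.range N).erase k0, f (k+2) := by
    apply Finset.sum_congr rfl
    intro k hk'
    have hne : k ≠ k0 := (Finset.mem_erase.mp hk').1
    rw [Function.update_of_ne (by omega)]
  rw [h2, Function.update_self]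
  omega

lemma sum_sub_update {N k0 : ℕ} (hk : k0 < N) (f g : ℕ → ℕ) (hlt : g (k0+2) < f (k0+2)) :
    (∑ k ∈ Finset.range N, (f (k+2) - (Function.update g (k0+2) (g (k0+2) + 1)) (k + 2))) + 1
      = ∑ k ∈ Finset.range N, (f (k+2) - g (k+2)) := by
  have hmem : k0 ∈ Finset.range N := Finset.mem_range.mpr hk
  rw [← Finset.add_sum_erase _ _ hmem, ← Finset.add_sum_erase _ (fun k => f (k+2) - g (k+2)) hmem]
  have h2 : ∑ k ∈ (Finset.range N).erase k0,
      (f (k+2) - (Function.update g (k0+2) (g (k0+2) + 1)) (k + 2))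
      = ∑ k ∈ (Finset.range N).erase k0, (f (k+2) - g (k+2)) := by
    apply Finset.sum_congr rfl
    intro k hk'
    have hne : k ≠ k0 := (Finset.mem_erase.mp hk').1
    rw [Function.update_of_ne (by omega)]
  rw [h2, Function.update_self]
  omega

lemma chain_aux {n : ℕ} [NeZero n] (y : ℕ → ℕ)
    (hy : ∀ ℓ, 2 ≤ ℓ → ℓ ≤ n → y ℓ ≤ ℓ - 1) :
    ∀ d (x : ℕ → ℕ), (∀ ℓ, 2 ≤ ℓ → ℓ ≤ n → x ℓ ≤ ℓ - 1) →
      (∀ ℓ, 2 ≤ ℓ → ℓ ≤ n → x ℓ ≤ y ℓ) →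
      (∑ k ∈ Finset.range (n-1), (y (k+2) - x (k+2))) = d →
      bruhatLE n (omegaPerm n x) (omegaPerm n y) := by
  intro d
  induction d with
  | zero =>
    intro x hx hxy hsum
    have hEq : omegaPerm n x = omegaPerm n y := by
      unfold omegaPerm
      congr 1
      apply List.map_congr_left
      intro k hk
      rw [List.mem_range] at hk
      have h0 := (Finset.sum_eq_zero_iff.mp hsum) k (Finset.mem_range.mpr hk)
      have h1 := hxy (k+2) (by omega) (by omega)
      have : x (k+2) = y (k+2) := by omega
      rw [this]
    rw [hEq]
    exact Relation.ReflTransGen.refl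
  | succ d ih =>
    intro x hx hxy hsum
    have hex : ∃ k0, k0 < n - 1 ∧ x (k0+2) < y (k0+2) := by
      by_contra hcon
      push_neg at hcon
      have h0 : ∑ k ∈ Finset.range (n-1), (y (k+2) - x (k+2)) = 0 := by
        apply Finset.sum_eq_zero
        intro k hk
        rw [Finset.mem_range] at hk
        have := hcon k hk
        omega
      omega
    obtain ⟨k0, hk0, hlt⟩ := hex
    set x' := Function.update x (k0+2) (x (k0+2) + 1) with hx'def
    have hyk : y (k0+2) ≤ k0 + 1 := by
      have := hy (k0+2) (by omega) (by omega)
      omega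
    have hm : x (k0+2) ≤ k0 := by omega
    have hx'adm : ∀ ℓ, 2 ≤ ℓ → ℓ ≤ n → x' ℓ ≤ ℓ - 1 := by
      intro ℓ h2 hn'
      rcases eq_or_ne ℓ (k0+2) with rfl | hne
      · rw [hx'def, Function.update_self]; omega
      · rw [hx'def, Function.update_of_ne hne]; exact hx ℓ h2 hn'
    have hxy' : ∀ ℓ, 2 ≤ ℓ → ℓ ≤ n → x' ℓ ≤ y ℓ := by
      intro ℓ h2 hn'
      rcases eq_or_ne ℓ (k0+2) with rfl | hne
      · rw [hx'def, Function.update_self]; omega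
      · rw [hx'def, Function.update_of_ne hne]; exact hxy ℓ h2 hn'
    have hsum' : ∑ k ∈ Finset.range (n-1), (y (k+2) - x' (k+2)) = d := by
      have := sum_sub_update hk0 y x hlt
      rw [← hx'def] at this
      omega
    apply Relation.ReflTransGen.head ?_ (ih x' hx'adm hxy' hsum')
    set m := x (k0+2) with hmdef
    constructor
    · -- existence of the transposition
      have hmap : (List.range (n-1)).map (fun k => uPerm n (k+2) (x' (k+2)))
          = (List.range (n-1)).map (fun k => if k = k0
              then uPerm n (k+2) (x (k+2)) * sT n (k0+1-m) else uPerm n (k+2) (x (k+2))) := by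
        apply List.map_congr_left
        intro k _
        rcases eq_or_ne k k0 with rfl | hne
        · rw [if_pos rfl, hx'def, Function.update_self, uPerm_succ,
            show k+2-1-m = k+1-m from by omega, hmdef]
        · rw [if_neg hne, hx'def, Function.update_of_ne (by omega)]
      obtain ⟨C, hC⟩ := prod_mul_mid hk0 (fun k => uPerm n (k+2) (x (k+2))) (sT n (k0+1-m))
      have hωx' : omegaPerm n x' = omegaPerm n x * (C⁻¹ * sT n (k0+1-m) * C) := by
        show ((List.range (n-1)).map (fun k => uPerm n (k+2) (x' (k+2)))).prod = _
        rw [hmap]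
        exact hC
      have hsT : sT n (k0+1-m) = Equiv.swap ((k0-m : ℕ) : Fin n) ((k0+1-m : ℕ) : Fin n) := by
        unfold sT; simp only [Fin.ofNat_eq_cast]
        rw [show k0+1-m-1 = k0-m from by omega]
      have habne : ((k0-m : ℕ) : Fin n) ≠ ((k0+1-m : ℕ) : Fin n) := by
        apply fin_ne_of_val_ne
        rw [Fin.val_natCast, Fin.val_natCast, Nat.mod_eq_of_lt (by omega), Nat.mod_eq_of_lt (by omega)]
        omega
      refine ⟨C⁻¹ (((k0-m : ℕ) : Fin n)), C⁻¹ (((k0+1-m : ℕ) : Fin n)),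
        fun h => habne (C⁻¹.injective h), ?_⟩
      rw [hωx']
      congr 1
      rw [Equiv.swap_apply_apply C⁻¹, inv_inv, hsT]
    · rw [lenP_omega hx, lenP_omega hx'adm, hx'def, hmdef]
      have := sum_update_add_one hk0 x
      omega


/-- If `x_ℓ ≤ y_ℓ` for all `2 ≤ ℓ ≤ n` then `ω(x) ≤ ω(y)` in Bruhat order. -/
theorem stmt3 (n : ℕ) [NeZero n] (x y : ℕ → ℕ)
    (hx : ∀ ℓ, 2 ≤ ℓ → ℓ ≤ n → x ℓ ≤ ℓ - 1)
    (hy : ∀ ℓ, 2 ≤ ℓ → ℓ ≤ n → y ℓ ≤ ℓ - 1)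
    (hxy : ∀ ℓ, 2 ≤ ℓ → ℓ ≤ n → x ℓ ≤ y ℓ) :
    bruhatLE n (omegaPerm n x) (omegaPerm n y) :=
  chain_aux y hy _ x hx hxy rfl
end

section
/- Let w ∈ S_n be an h-permissible filling of the one-row diagram for a Hessenberg function h, and let DP be its set of dimension pairs. Then DP is a subset of the set of inversions of w; consequently, if x_ℓ denotes the number of dimension pairs of w with top part ℓ, then the associated permutation ω(x) is less than or equal to w in Bruhat order. -/
open Equiv Finset

/-- A permutation `w ∈ S_n`, viewed as a filling of the one-row diagram with
`n` boxes via its one-line notation `(w(1), …, w(n))` (letters `1, …, n`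
encoded as `Fin n`), is `h`-permissible if every horizontal adjacency with `k`
immediately left of `j` satisfies `k ≤ h(j)`. -/
def IsPermissible (n : ℕ) (h : ℕ → ℕ) (w : Equiv.Perm (Fin n)) : Prop :=
  ∀ i : Fin n, ∀ hi : (i : ℕ) + 1 < n,
    (w i : ℕ) + 1 ≤ h ((w ⟨(i : ℕ) + 1, hi⟩ : ℕ) + 1)

/-- The 334-type Hessenberg function: `h(1) = h(2) = 3`, `h(i) = i + 1` for
`3 ≤ i ≤ n - 1`, and `h(n) = n`. -/
def h334 (n i : ℕ) : ℕ := if i ≤ 2 then 3 else min (i + 1) n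

/-- The Peterson Hessenberg function: `h'(i) = i + 1` for `i ≤ n - 1`,
`h'(n) = n`. -/
def hPet (n i : ℕ) : ℕ := min (i + 1) n

/-- The one-line notation of `w ∈ S_n`, as a list of the letters `1, …, n`. -/
def oneLine (n : ℕ) (w : Equiv.Perm (Fin n)) : List ℕ :=
  List.ofFn fun i : Fin n => (w i : ℕ) + 1

/-- A decreasing staircase: each entry is exactly one less than the previous. -/
def IsDecStair (l : List ℕ) : Prop := List.Chain' (fun a b => b + 1 = a) l

/-- An increasing sequence of (nonempty) decreasing staircases: a concatenation
of decreasing staircase blocks in which every entry of each block is smaller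
than every entry of every later block. -/
def IsIncStaircases (l : List ℕ) : Prop :=
  ∃ blocks : List (List ℕ), l = blocks.flatten ∧
    (∀ b ∈ blocks, b ≠ [] ∧ IsDecStair b) ∧
    List.Pairwise (fun b1 b2 => ∀ a ∈ b1, ∀ c ∈ b2, a < c) blocks

/-- `(a, b)` is a dimension pair of the filling `w` (letters encoded in
`Fin n`): `b > a`, `b` appears to the left of `a` in one-line notation, and if
`c` is the entry directly to the right of `a` then `b ≤ h(c)`. -/
def DimPair (n : ℕ) (h : ℕ → ℕ) (w : Equiv.Perm (Fin n)) (a b : Fin n) : Prop :=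
  a < b ∧ w⁻¹ b < w⁻¹ a ∧
    ∀ hc : (w⁻¹ a : ℕ) + 1 < n, (b : ℕ) + 1 ≤ h ((w ⟨(w⁻¹ a : ℕ) + 1, hc⟩ : ℕ) + 1)

namespace St8


variable {n : ℕ}

def Invs (n : ℕ) (w : Equiv.Perm (Fin n)) : Finset (Fin n × Fin n) :=
  Finset.univ.filter (fun p : Fin n × Fin n => p.1 < p.2 ∧ w p.2 < w p.1)

lemma mem_Invs {w : Equiv.Perm (Fin n)} {p : Fin n × Fin n} :
    p ∈ Invs n w ↔ p.1 < p.2 ∧ w p.2 < w p.1 := by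
  simp [Invs]

lemma lenP_eq (w : Equiv.Perm (Fin n)) : lenP n w = (Invs n w).card := rfl

lemma swap_lt_of {i j a b : Fin n} (hij : i < j) (hab : a < b)
    (h1 : a = i → j < b) (h2 : b = j → a < i) :
    Equiv.swap i j a < Equiv.swap i j b := by
  rcases eq_or_ne a i with ha | hai
  · have hjb := h1 ha
    rw [ha, Equiv.swap_apply_left,
      Equiv.swap_apply_of_ne_of_ne (ne_of_gt (hij.trans hjb)) (ne_of_gt hjb)]
    exact hjb
  · rcases eq_or_ne b j with hb | hbj
    · have hai' := h2 hb
      rw [hb, Equiv.swap_apply_right,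
        Equiv.swap_apply_of_ne_of_ne hai (ne_of_lt (hai'.trans hij))]
      exact hai'
    · rcases eq_or_ne a j with haj | haj
      · have hjb : j < b := haj ▸ hab
        rw [haj, Equiv.swap_apply_right,
          Equiv.swap_apply_of_ne_of_ne (ne_of_gt (hij.trans hjb)) hbj]
        exact hij.trans hjb
      · rcases eq_or_ne b i with hbi | hbi
        · have hai' : a < i := hbi ▸ hab
          rw [hbi, Equiv.swap_apply_left,
            Equiv.swap_apply_of_ne_of_ne hai haj]
          exact hai'.trans hij
        · rw [Equiv.swap_apply_of_ne_of_ne hai haj,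
            Equiv.swap_apply_of_ne_of_ne hbi hbj]
          exact hab

/-- Swapping an ascending pair of positions strictly increases inversion count. -/
lemma lenT {w : Equiv.Perm (Fin n)} {i j : Fin n} (hij : i < j) (hw : w i < w j) :
    lenP n w < lenP n (w * Equiv.swap i j) := by
  classical
  have hps : ∀ p, (w * Equiv.swap i j) p = w (Equiv.swap i j p) := fun _ => rfl
  have hmem : (i, j) ∈ Invs n (w * Equiv.swap i j) := by
    rw [mem_Invs]
    refine ⟨hij, ?_⟩
    rw [hps, hps, Equiv.swap_apply_left, Equiv.swap_apply_right]
    exact hw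
  have hmix : ∀ a b c d : Fin n, a < b → c < d →
      ((a = i ∧ b < j) ∨ (b = j ∧ i < a)) →
      (a, b) = (Equiv.swap i j c, Equiv.swap i j d) → False := by
    intro a b c d hab hcd hP heq
    have hc : Equiv.swap i j a = c := by
      have h1 : a = Equiv.swap i j c := congrArg Prod.fst heq
      rw [h1, Equiv.swap_apply_self]
    have hd : b = Equiv.swap i j d := congrArg Prod.snd heq
    rcases hP with ⟨ha, hbj⟩ | ⟨hb, hia⟩
    · rw [ha, Equiv.swap_apply_left] at hc
      have hdj : j < d := by rw [hc]; exact hcd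
      rw [Equiv.swap_apply_of_ne_of_ne (ne_of_gt (hij.trans hdj)) (ne_of_gt hdj)] at hd
      rw [hd] at hbj
      exact absurd hbj (not_lt.mpr hdj.le)
    · have hd' : Equiv.swap i j b = d := by rw [hd, Equiv.swap_apply_self]
      rw [hb, Equiv.swap_apply_right] at hd'
      have hci : c < i := by rw [hd']; exact hcd
      have hc' : a = Equiv.swap i j c := congrArg Prod.fst heq
      rw [Equiv.swap_apply_of_ne_of_ne (ne_of_lt hci) (ne_of_lt (hci.trans hij))] at hc'
      rw [hc'] at hia
      exact absurd hia (not_lt.mpr hci.le)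
  have hkey : (Invs n w).card ≤ ((Invs n (w * Equiv.swap i j)).erase (i, j)).card := by
    apply Finset.card_le_card_of_injOn
      (fun p => if (p.1 = i ∧ p.2 < j) ∨ (p.2 = j ∧ i < p.1) then p
                else (Equiv.swap i j p.1, Equiv.swap i j p.2))
    · rintro ⟨a, b⟩ hp
      rw [Finset.mem_coe, mem_Invs] at hp
      obtain ⟨hab, hba⟩ := hp
      dsimp only at hab hba ⊢
      rw [Finset.mem_coe, Finset.mem_erase]
      by_cases hc : (a = i ∧ b < j) ∨ (b = j ∧ i < a)
      · rw [if_pos hc]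
        rcases hc with ⟨ha, hbj⟩ | ⟨hb, hia⟩
        · refine ⟨fun hcon => (ne_of_lt hbj) (congrArg Prod.snd hcon),
            mem_Invs.mpr ⟨hab, ?_⟩⟩
          rw [hps, hps, ha, Equiv.swap_apply_left,
            Equiv.swap_apply_of_ne_of_ne (by rw [← ha]; exact ne_of_gt hab) (ne_of_lt hbj)]
          rw [ha] at hba
          exact lt_trans hba hw
        · refine ⟨fun hcon => (ne_of_gt hia) (congrArg Prod.fst hcon),
            mem_Invs.mpr ⟨hab, ?_⟩⟩
          rw [hps, hps, hb, Equiv.swap_apply_right,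
            Equiv.swap_apply_of_ne_of_ne (ne_of_gt hia) (by rw [← hb]; exact ne_of_lt hab)]
          rw [hb] at hba
          exact lt_trans hw hba
      · rw [if_neg hc]
        push_neg at hc
        obtain ⟨hc1, hc2⟩ := hc
        have hexc : ¬(a = i ∧ b = j) := by
          rintro ⟨ha, hb⟩
          rw [ha, hb] at hba
          exact absurd hba (not_lt.mpr hw.le)
        have horder : Equiv.swap i j a < Equiv.swap i j b := by
          apply swap_lt_of hij hab
          · intro ha
            refine lt_of_le_of_ne (hc1 ha) ?_
            intro hjb
            exact hexc ⟨ha, hjb.symm⟩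
          · intro hb
            refine lt_of_le_of_ne (hc2 hb) ?_
            intro hai
            exact hexc ⟨hai, hb⟩
        refine ⟨?_, mem_Invs.mpr ⟨horder, ?_⟩⟩
        · intro hcon
          have h1 : Equiv.swap i j a = i := congrArg Prod.fst hcon
          have h2 : Equiv.swap i j b = j := congrArg Prod.snd hcon
          have ha : a = j := by
            have := congrArg (Equiv.swap i j) h1
            rw [Equiv.swap_apply_self, Equiv.swap_apply_left] at this; exact this
          have hb : b = i := by
            have := congrArg (Equiv.swap i j) h2
            rw [Equiv.swap_apply_self, Equiv.swap_apply_right] at this; exact this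
          rw [ha, hb] at hab
          exact absurd (hab.trans hij) (lt_irrefl j)
        · rw [hps, hps, Equiv.swap_apply_self, Equiv.swap_apply_self]
          exact hba
    · rintro ⟨a, b⟩ hp ⟨c, d⟩ hq heq
      rw [Finset.mem_coe, mem_Invs] at hp hq
      obtain ⟨hab, hba⟩ := hp
      obtain ⟨hcd, hdc⟩ := hq
      dsimp only at hab hba hcd hdc heq
      split_ifs at heq with hP hQ hQ
      · exact heq
      · exact absurd heq (fun h => hmix a b c d hab hcd hP h)
      · exact absurd heq.symm (fun h => hmix c d a b hcd hab hQ h)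
      · have e1 : a = c := Equiv.injective _ (congrArg Prod.fst heq)
        have e2 : b = d := Equiv.injective _ (congrArg Prod.snd heq)
        rw [e1, e2]
  have h1 : ((Invs n (w * Equiv.swap i j)).erase (i, j)).card
      = (Invs n (w * Equiv.swap i j)).card - 1 := Finset.card_erase_of_mem hmem
  have h2 : 1 ≤ (Invs n (w * Equiv.swap i j)).card := Finset.card_pos.mpr ⟨_, hmem⟩
  rw [lenP_eq, lenP_eq]
  omega

end St8

namespace St8

variable {n : ℕ}

lemma conj_eq (x : Equiv.Perm (Fin n)) (i j s1 s2 : Fin n) :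
    (x * Equiv.swap s1 s2) * Equiv.swap (Equiv.swap s1 s2 i) (Equiv.swap s1 s2 j)
      = (x * Equiv.swap i j) * Equiv.swap s1 s2 := by
  rw [Equiv.swap_apply_apply, Equiv.swap_inv]
  simp only [mul_assoc]
  congr 1
  rw [← mul_assoc (Equiv.swap s1 s2) (Equiv.swap s1 s2), Equiv.swap_mul_self, one_mul]

lemma Slem' {x : Equiv.Perm (Fin n)} {i j s1 s2 : Fin n} (hij : i < j)
    (hlen : lenP n x < lenP n (x * Equiv.swap i j)) (hadj : (s1 : ℕ) + 1 = (s2 : ℕ)) :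
    bruhatLE n (x * Equiv.swap s1 s2) (x * Equiv.swap i j) ∨
      bruhatLE n (x * Equiv.swap s1 s2) (x * Equiv.swap i j * Equiv.swap s1 s2) := by
  have hs12 : s1 < s2 := by rw [Fin.lt_def]; omega
  have hxij : x i ≠ x j := fun h => (ne_of_lt hij) (x.injective h)
  have hx : x i < x j := by
    rcases lt_or_gt_of_ne hxij with h | h
    · exact h
    · exfalso
      have h2 : (x * Equiv.swap i j) i < (x * Equiv.swap i j) j := by
        show x (Equiv.swap i j i) < x (Equiv.swap i j j)
        rw [Equiv.swap_apply_left, Equiv.swap_apply_right]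
        exact h
      have h3 := lenT hij h2
      rw [mul_assoc, Equiv.swap_mul_self, mul_one] at h3
      omega
  by_cases hcase : i = s1 ∧ j = s2
  · left
    rw [hcase.1, hcase.2]
    exact Relation.ReflTransGen.refl
  · right
    have hlt : Equiv.swap s1 s2 i < Equiv.swap s1 s2 j := by
      apply swap_lt_of hs12 hij
      · intro hi1
        have hj2 : j ≠ s2 := fun hj => hcase ⟨hi1, hj⟩
        rw [Fin.lt_def] at hij ⊢
        rw [Fin.ext_iff] at hi1
        have := (Fin.ext_iff (a := j) (b := s2)).not.mp hj2
        omega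
      · intro hj2
        have hi1 : i ≠ s1 := fun hi => hcase ⟨hi, hj2⟩
        rw [Fin.lt_def] at hij ⊢
        rw [Fin.ext_iff] at hj2
        have := (Fin.ext_iff (a := i) (b := s1)).not.mp hi1
        omega
    have hvals : (x * Equiv.swap s1 s2) (Equiv.swap s1 s2 i)
        < (x * Equiv.swap s1 s2) (Equiv.swap s1 s2 j) := by
      show x (Equiv.swap s1 s2 (Equiv.swap s1 s2 i)) < x (Equiv.swap s1 s2 (Equiv.swap s1 s2 j))
      rw [Equiv.swap_apply_self, Equiv.swap_apply_self]
      exact hx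
    have hT := lenT hlt hvals
    rw [conj_eq] at hT
    exact Relation.ReflTransGen.single
      ⟨⟨_, _, ne_of_lt hlt, (conj_eq x i j s1 s2).symm⟩, hT⟩

lemma Slem {x : Equiv.Perm (Fin n)} {i j s1 s2 : Fin n} (hij : i ≠ j)
    (hlen : lenP n x < lenP n (x * Equiv.swap i j)) (hadj : (s1 : ℕ) + 1 = (s2 : ℕ)) :
    bruhatLE n (x * Equiv.swap s1 s2) (x * Equiv.swap i j) ∨
      bruhatLE n (x * Equiv.swap s1 s2) (x * Equiv.swap i j * Equiv.swap s1 s2) := by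
  rcases hij.lt_or_gt with h | h
  · exact Slem' h hlen hadj
  · rw [Equiv.swap_comm i j] at hlen ⊢
    exact Slem' h hlen hadj

lemma Llem {u w : Equiv.Perm (Fin n)} (h : bruhatLE n u w) {s1 s2 : Fin n}
    (hadj : (s1 : ℕ) + 1 = (s2 : ℕ)) :
    bruhatLE n (u * Equiv.swap s1 s2) w ∨
      bruhatLE n (u * Equiv.swap s1 s2) (w * Equiv.swap s1 s2) := by
  have h' : Relation.ReflTransGen
      (fun a b => (∃ i j : Fin n, i ≠ j ∧ b = a * Equiv.swap i j) ∧ lenP n a < lenP n b) u w := h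
  clear h
  induction h' with
  | refl => exact Or.inr Relation.ReflTransGen.refl
  | tail hab hbc ih =>
    rcases ih with h1 | h1
    · exact Or.inl (Relation.ReflTransGen.tail h1 hbc)
    · obtain ⟨⟨i, j, hij, rfl⟩, hlen⟩ := hbc
      rcases Slem hij hlen hadj with h2 | h2
      · exact Or.inl (Relation.ReflTransGen.trans h1 h2)
      · exact Or.inr (Relation.ReflTransGen.trans h1 h2)

end St8

namespace St8

variable {n : ℕ}

lemma inv_apply_self' (w : Equiv.Perm (Fin n)) (x : Fin n) : w⁻¹ (w x) = x :=
  Equiv.Perm.inv_eq_iff_eq.mpr rfl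

lemma apply_inv_self' (w : Equiv.Perm (Fin n)) (x : Fin n) : w (w⁻¹ x) = x :=
  (Equiv.eq_symm_apply w).mp rfl

def invTop (n : ℕ) (w : Equiv.Perm (Fin n)) (ℓ : ℕ) : ℕ :=
  (Finset.univ.filter (fun p : Fin n × Fin n =>
    p.1 < p.2 ∧ w⁻¹ p.2 < w⁻¹ p.1 ∧ (p.2 : ℕ) + 1 = ℓ)).card

def Omega (n : ℕ) [NeZero n] (m : ℕ) (x : ℕ → ℕ) : Equiv.Perm (Fin n) :=
  ((List.range (m - 1)).map (fun k => uPerm n (k + 2) (x (k + 2)))).prod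

lemma Omega_n_eq (n : ℕ) [NeZero n] (x : ℕ → ℕ) : Omega n n x = omegaPerm n x := rfl

lemma vals_le {w : Equiv.Perm (Fin n)} {M : ℕ}
    (hfix : ∀ p : Fin n, M + 1 ≤ (p : ℕ) → w p = p)
    {q : Fin n} (hq : (q : ℕ) ≤ M) : ((w q : Fin n) : ℕ) ≤ M := by
  by_contra hgt
  have h1 : M + 1 ≤ ((w q : Fin n) : ℕ) := by omega
  have h2 := w.injective (hfix (w q) h1)
  rw [h2] at h1
  omega

lemma fix_inv {w : Equiv.Perm (Fin n)} {M : ℕ}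
    (hfix : ∀ p : Fin n, M + 1 ≤ (p : ℕ) → w p = p) :
    ∀ p : Fin n, M + 1 ≤ (p : ℕ) → w⁻¹ p = p := by
  intro p hp
  rw [Equiv.Perm.inv_eq_iff_eq]
  exact (hfix p hp).symm

lemma posTop {w : Equiv.Perm (Fin n)} {M : ℕ} (hM : M < n)
    (hfix : ∀ p : Fin n, M + 1 ≤ (p : ℕ) → w p = p) :
    ((w⁻¹ ⟨M, hM⟩ : Fin n) : ℕ) ≤ M ∧
      invTop n w (M + 1) + ((w⁻¹ ⟨M, hM⟩ : Fin n) : ℕ) = M := by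
  have hivle : ∀ q : Fin n, (q : ℕ) ≤ M → ((w⁻¹ q : Fin n) : ℕ) ≤ M :=
    fun q hq => vals_le (w := w⁻¹) (fix_inv hfix) hq
  have hPle : ((w⁻¹ ⟨M, hM⟩ : Fin n) : ℕ) ≤ M := hivle _ (le_refl M)
  refine ⟨hPle, ?_⟩
  have hj' : ∀ q' : Fin n, ((w⁻¹ ⟨M, hM⟩ : Fin n) : ℕ) < (q' : ℕ) → (q' : ℕ) ≤ M →
      (w q', (⟨M, hM⟩ : Fin n)) ∈ (Finset.univ.filter (fun p : Fin n × Fin n =>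
        p.1 < p.2 ∧ w⁻¹ p.2 < w⁻¹ p.1 ∧ (p.2 : ℕ) + 1 = M + 1)) := by
    intro q' h1 h2
    rw [Finset.mem_filter]
    refine ⟨Finset.mem_univ _, ?_, ?_, rfl⟩
    · rw [Fin.lt_def]
      have hle : ((w q' : Fin n) : ℕ) ≤ M := vals_le hfix h2
      have hne : ((w q' : Fin n) : ℕ) ≠ M := by
        intro hcon
        have he : w q' = ⟨M, hM⟩ := Fin.ext hcon
        have : q' = w⁻¹ ⟨M, hM⟩ := by rw [← he, inv_apply_self']
        rw [this] at h1
        omega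
      show ((w q' : Fin n) : ℕ) < M
      omega
    · rw [inv_apply_self', Fin.lt_def]
      exact h1
  have hcard : invTop n w (M + 1)
      = (Finset.Ioc ((w⁻¹ ⟨M, hM⟩ : Fin n) : ℕ) M).card := by
    unfold invTop
    refine Finset.card_bij' (fun p _ => ((w⁻¹ p.1 : Fin n) : ℕ))
      (fun q hq => (w ⟨q, by have := (Finset.mem_Ioc.mp hq).2; omega⟩, ⟨M, hM⟩))
      ?_ ?_ ?_ ?_
    · rintro ⟨a, b⟩ hp
      rw [Finset.mem_filter] at hp
      obtain ⟨-, h1, h2, h3⟩ := hp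
      dsimp only at h1 h2 h3 ⊢
      have hb : b = ⟨M, hM⟩ := Fin.ext (show (b : ℕ) = M by omega)
      rw [Finset.mem_Ioc]
      constructor
      · rw [hb] at h2
        exact Fin.lt_def.mp h2
      · rw [hb] at h1
        exact hivle a (le_of_lt (Fin.lt_def.mp h1))
    · intro q hq
      rw [Finset.mem_Ioc] at hq
      exact hj' _ hq.1 hq.2
    · rintro ⟨a, b⟩ hp
      rw [Finset.mem_filter] at hp
      obtain ⟨-, h1, h2, h3⟩ := hp
      dsimp only at h1 h2 h3 ⊢
      have hb : b = ⟨M, hM⟩ := Fin.ext (show (b : ℕ) = M by omega)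
      subst hb
      simp
    · intro q hq
      dsimp only
      rw [inv_apply_self']
  rw [hcard, Nat.card_Ioc]
  omega

lemma swap_lt_iff {q1 q2 r t : Fin n} (hq : (q1 : ℕ) + 1 = (q2 : ℕ))
    (hr : r ≠ q1) (ht : t ≠ q1) :
    (Equiv.swap q1 q2 r < Equiv.swap q1 q2 t ↔ r < t) := by
  have hr' : (r : ℕ) ≠ (q1 : ℕ) := fun h => hr (Fin.ext h)
  have ht' : (t : ℕ) ≠ (q1 : ℕ) := fun h => ht (Fin.ext h)
  rcases eq_or_ne r q2 with hr2 | hr2 <;> rcases eq_or_ne t q2 with ht2 | ht2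
  · rw [hr2, ht2]
    constructor <;> intro h <;> exact absurd h (lt_irrefl _)
  · have ht2' : (t : ℕ) ≠ (q2 : ℕ) := fun h => ht2 (Fin.ext h)
    rw [hr2, Equiv.swap_apply_right, Equiv.swap_apply_of_ne_of_ne ht ht2,
      Fin.lt_def, Fin.lt_def]
    omega
  · have hr2' : (r : ℕ) ≠ (q2 : ℕ) := fun h => hr2 (Fin.ext h)
    rw [ht2, Equiv.swap_apply_right, Equiv.swap_apply_of_ne_of_ne hr hr2,
      Fin.lt_def, Fin.lt_def]
    omega
  · rw [Equiv.swap_apply_of_ne_of_ne hr hr2, Equiv.swap_apply_of_ne_of_ne ht ht2]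

lemma invTop_mul_swap {w : Equiv.Perm (Fin n)} {q1 q2 : Fin n}
    (hq : (q1 : ℕ) + 1 = (q2 : ℕ)) {ℓ : ℕ} (hl : ℓ ≤ ((w q1 : Fin n) : ℕ)) :
    invTop n (w * Equiv.swap q1 q2) ℓ = invTop n w ℓ := by
  unfold invTop
  apply congrArg Finset.card
  apply Finset.filter_congr
  rintro ⟨a, b⟩ -
  dsimp only
  by_cases h3 : (b : ℕ) + 1 = ℓ
  swap
  · simp [h3]
  by_cases h1 : a < b
  swap
  · simp [h1]
  simp only [h1, h3, true_and, and_true]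
  have hvb : (b : ℕ) < ((w q1 : Fin n) : ℕ) := by omega
  have hva : (a : ℕ) < ((w q1 : Fin n) : ℕ) := lt_trans (Fin.lt_def.mp h1) hvb
  have ha' : w⁻¹ a ≠ q1 := by
    intro hcon
    have he : a = w q1 := by rw [← hcon, apply_inv_self']
    rw [he] at hva
    omega
  have hb' : w⁻¹ b ≠ q1 := by
    intro hcon
    have he : b = w q1 := by rw [← hcon, apply_inv_self']
    rw [he] at hvb
    omega
  rw [mul_inv_rev, Equiv.swap_inv]
  show Equiv.swap q1 q2 (w⁻¹ b) < Equiv.swap q1 q2 (w⁻¹ a) ↔ _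
  exact swap_lt_iff hq hb' ha'

end St8

namespace St8

variable {n : ℕ}

lemma uPerm_zero (n : ℕ) [NeZero n] (ℓ : ℕ) : uPerm n ℓ 0 = 1 := by
  simp [uPerm]

lemma uPerm_succ (n : ℕ) [NeZero n] (ℓ X : ℕ) :
    uPerm n ℓ (X + 1) = uPerm n ℓ X * sT n (ℓ - 1 - X) := by
  unfold uPerm
  rw [List.range_succ, List.map_append, List.prod_append, List.map_singleton,
    List.prod_singleton]

lemma Omega_succ (n : ℕ) [NeZero n] (m : ℕ) (hm : 1 ≤ m) (x : ℕ → ℕ) :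
    Omega n (m + 1) x = Omega n m x * uPerm n (m + 1) (x (m + 1)) := by
  unfold Omega
  have h1 : m + 1 - 1 = (m - 1) + 1 := by omega
  rw [h1, List.range_succ, List.map_append, List.prod_append, List.map_singleton,
    List.prod_singleton]
  have h2 : m - 1 + 2 = m + 1 := by omega
  rw [h2]

lemma Omega_congr (n : ℕ) [NeZero n] (m : ℕ) (x x' : ℕ → ℕ)
    (h : ∀ ℓ, 2 ≤ ℓ → ℓ ≤ m → x ℓ = x' ℓ) : Omega n m x = Omega n m x' := by
  unfold Omega
  apply congrArg List.prod
  apply List.map_congr_left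
  intro k hk
  rw [List.mem_range] at hk
  rw [h (k + 2) (by omega) (by omega)]

lemma sT_eq (n : ℕ) [NeZero n] (P : ℕ) (h1 : P + 1 < n) :
    sT n (P + 1) = Equiv.swap ⟨P, by omega⟩ ⟨P + 1, h1⟩ := by
  unfold sT
  have e1 : Fin.ofNat n (P + 1 - 1 : ℕ) = ⟨P, by omega⟩ := by
    apply Fin.ext
    rw [show P + 1 - 1 = P from rfl]
    exact Nat.mod_eq_of_lt (by omega)
  have e2 : Fin.ofNat n (P + 1 : ℕ) = ⟨P + 1, h1⟩ := by
    apply Fin.ext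
    exact Nat.mod_eq_of_lt h1
  rw [e1, e2]

lemma fix_one {w : Equiv.Perm (Fin n)} (hfix : ∀ p : Fin n, 1 ≤ (p : ℕ) → w p = p) :
    w = 1 := by
  apply Equiv.ext
  intro p
  show w p = p
  rcases Nat.eq_zero_or_pos (p : ℕ) with h0 | h1
  · by_contra hne
    have h2 : 1 ≤ ((w p : Fin n) : ℕ) := by
      rcases Nat.eq_zero_or_pos ((w p : Fin n) : ℕ) with h | h
      · exact absurd (Fin.ext (h.trans h0.symm)) hne
      · exact h
    exact hne (w.injective (hfix (w p) h2))
  · exact hfix p h1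

lemma main (n : ℕ) [NeZero n] (m : ℕ) : ∀ (w : Equiv.Perm (Fin n)),
    (∀ p : Fin n, m ≤ (p : ℕ) → w p = p) →
    ∀ x : ℕ → ℕ, (∀ ℓ, 2 ≤ ℓ → ℓ ≤ m → x ℓ ≤ invTop n w ℓ) →
    bruhatLE n (Omega n m x) w := by
  induction m with
  | zero =>
    intro w hfix x hx
    have hw : w = 1 := fix_one (fun p _ => hfix p (Nat.zero_le _))
    have hO : Omega n 0 x = 1 := by simp [Omega]
    rw [hw, hO]
    exact Relation.ReflTransGen.refl
  | succ m ih =>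
    intro w hfix x hx
    rcases Nat.eq_zero_or_pos m with hm0 | hm1
    · subst hm0
      have hw : w = 1 := fix_one hfix
      have hO : Omega n 1 x = 1 := by simp [Omega]
      rw [hw, hO]
      exact Relation.ReflTransGen.refl
    · by_cases hmn : n ≤ m
      · have hx1 : x (m + 1) = 0 := by
          have h0 : invTop n w (m + 1) = 0 := by
            unfold invTop
            rw [Finset.card_eq_zero, Finset.filter_eq_empty_iff]
            rintro p -
            rintro ⟨-, -, h3⟩
            have := p.2.isLt
            omega
          have := hx (m + 1) (by omega) (le_refl _)
          omega
        rw [Omega_succ n m hm1 x, hx1, uPerm_zero, mul_one]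
        exact ih w (fun p hp => absurd p.isLt (by omega))
          x (fun ℓ h2 hl => hx ℓ h2 (by omega))
      · push_neg at hmn
        have inner : ∀ (X : ℕ) (w : Equiv.Perm (Fin n)),
            (∀ p : Fin n, m + 1 ≤ (p : ℕ) → w p = p) →
            invTop n w (m + 1) = X →
            ∀ x : ℕ → ℕ, (∀ ℓ, 2 ≤ ℓ → ℓ ≤ m + 1 → x ℓ ≤ invTop n w ℓ) →
            bruhatLE n (Omega n (m + 1) x) w := by
          intro X
          induction X with
          | zero =>
            intro w hfix hX x hx
            obtain ⟨hPle, hPsum⟩ := posTop hmn hfix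
            have hP : ((w⁻¹ ⟨m, hmn⟩ : Fin n) : ℕ) = m := by omega
            have hwm : w ⟨m, hmn⟩ = ⟨m, hmn⟩ := by
              have h1 : w⁻¹ ⟨m, hmn⟩ = ⟨m, hmn⟩ := Fin.ext hP
              exact (Equiv.Perm.inv_eq_iff_eq.mp h1).symm
            have hfix' : ∀ p : Fin n, m ≤ (p : ℕ) → w p = p := by
              intro p hp
              rcases eq_or_lt_of_le hp with he | hlt
              · have hpm : p = ⟨m, hmn⟩ := Fin.ext he.symm
                rw [hpm]
                exact hwm
              · exact hfix p hlt
            have hx1 : x (m + 1) = 0 := by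
              have := hx (m + 1) (by omega) (le_refl _)
              omega
            rw [Omega_succ n m hm1 x, hx1, uPerm_zero, mul_one]
            exact ih w hfix' x (fun ℓ h2 hl => hx ℓ h2 (by omega))
          | succ X' ihX =>
            intro w hfix hX x hx
            obtain ⟨hPle, hPsum⟩ := posTop hmn hfix
            set P : ℕ := ((w⁻¹ ⟨m, hmn⟩ : Fin n) : ℕ) with hPdef
            have hPm : P + (X' + 1) = m := by omega
            have hP1 : P + 1 < n := by omega
            have hPn : P < n := by omega
            have hinvm : w⁻¹ ⟨m, hmn⟩ = (⟨P, hPn⟩ : Fin n) := Fin.ext hPdef.symm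
            have hwqP : w (⟨P, hPn⟩ : Fin n) = ⟨m, hmn⟩ := by
              rw [← hinvm, apply_inv_self']
            have hfix' : ∀ p : Fin n, m + 1 ≤ (p : ℕ) →
                (w * Equiv.swap (⟨P, hPn⟩ : Fin n) (⟨P + 1, hP1⟩ : Fin n)) p = p := by
              intro p hp
              have hp1 : p ≠ (⟨P, hPn⟩ : Fin n) := by
                intro h
                have := congrArg Fin.val h
                simp at this
                omega
              have hp2 : p ≠ (⟨P + 1, hP1⟩ : Fin n) := by
                intro h
                have := congrArg Fin.val h
                simp at this
                omega
              show w (Equiv.swap _ _ p) = p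
              rw [Equiv.swap_apply_of_ne_of_ne hp1 hp2]
              exact hfix p hp
            have hw'qP1 : (w * Equiv.swap (⟨P, hPn⟩ : Fin n) (⟨P + 1, hP1⟩ : Fin n)) (⟨P + 1, hP1⟩ : Fin n) = ⟨m, hmn⟩ := by
              show w (Equiv.swap _ _ _) = _
              rw [Equiv.swap_apply_right]
              exact hwqP
            have hinv' : (w * Equiv.swap (⟨P, hPn⟩ : Fin n) (⟨P + 1, hP1⟩ : Fin n))⁻¹ ⟨m, hmn⟩ = (⟨P + 1, hP1⟩ : Fin n) := by
              rw [Equiv.Perm.inv_eq_iff_eq]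
              exact hw'qP1.symm
            obtain ⟨hPle', hPsum'⟩ := posTop hmn hfix'
            rw [hinv'] at hPsum'
            have hX' : invTop n (w * Equiv.swap (⟨P, hPn⟩ : Fin n) (⟨P + 1, hP1⟩ : Fin n)) (m + 1) = X' := by
              have hv : (((⟨P + 1, hP1⟩ : Fin n) : Fin n) : ℕ) = P + 1 := rfl
              rw [hv] at hPsum'
              omega
            have hpres : ∀ ℓ, ℓ ≤ m →
                invTop n (w * Equiv.swap (⟨P, hPn⟩ : Fin n) (⟨P + 1, hP1⟩ : Fin n)) ℓ = invTop n w ℓ := by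
              intro ℓ hl
              apply invTop_mul_swap rfl
              rw [hwqP]
              exact hl
            have hww : (w * Equiv.swap (⟨P, hPn⟩ : Fin n) (⟨P + 1, hP1⟩ : Fin n)) * Equiv.swap (⟨P, hPn⟩ : Fin n) (⟨P + 1, hP1⟩ : Fin n) = w := by
              rw [mul_assoc, Equiv.swap_mul_self, mul_one]
            have ha0 : ((w (⟨P + 1, hP1⟩ : Fin n) : Fin n) : ℕ) < m := by
              have hle : ((w (⟨P + 1, hP1⟩ : Fin n) : Fin n) : ℕ) ≤ m := vals_le hfix (by show P + 1 ≤ m; omega)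
              have hne : w (⟨P + 1, hP1⟩ : Fin n) ≠ ⟨m, hmn⟩ := by
                intro hcon
                have h := w.injective (hcon.trans hwqP.symm)
                have := congrArg Fin.val h
                simp at this
              have hne' : ((w (⟨P + 1, hP1⟩ : Fin n) : Fin n) : ℕ) ≠ m := fun h => hne (Fin.ext h)
              omega
            have hasc : (w * Equiv.swap (⟨P, hPn⟩ : Fin n) (⟨P + 1, hP1⟩ : Fin n)) (⟨P, hPn⟩ : Fin n)
                < (w * Equiv.swap (⟨P, hPn⟩ : Fin n) (⟨P + 1, hP1⟩ : Fin n)) (⟨P + 1, hP1⟩ : Fin n) := by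
              rw [hw'qP1]
              show w (Equiv.swap _ _ _) < _
              rw [Equiv.swap_apply_left, Fin.lt_def]
              exact ha0
            have hlenstep : lenP n (w * Equiv.swap (⟨P, hPn⟩ : Fin n) (⟨P + 1, hP1⟩ : Fin n)) < lenP n w := by
              have h := lenT (show ((⟨P, hPn⟩ : Fin n) : Fin n) < (⟨P + 1, hP1⟩ : Fin n) by rw [Fin.lt_def]; omega) hasc
              rwa [hww] at h
            have hstepR : (fun a b => (∃ i j : Fin n, i ≠ j ∧ b = a * Equiv.swap i j) ∧
                lenP n a < lenP n b) (w * Equiv.swap (⟨P, hPn⟩ : Fin n) (⟨P + 1, hP1⟩ : Fin n)) w :=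
              ⟨⟨(⟨P, hPn⟩ : Fin n), (⟨P + 1, hP1⟩ : Fin n), by
                intro h
                have := congrArg Fin.val h
                simp at this, hww.symm⟩, hlenstep⟩
            by_cases hxm : x (m + 1) ≤ X'
            · have hb := ihX (w * Equiv.swap (⟨P, hPn⟩ : Fin n) (⟨P + 1, hP1⟩ : Fin n)) hfix' hX' x
                (fun ℓ h2 hl => by
                  rcases Nat.lt_or_ge ℓ (m + 1) with hlt | hge
                  · rw [hpres ℓ (by omega)]
                    exact hx ℓ h2 (by omega)
                  · have he : ℓ = m + 1 := by omega
                    rw [he, hX']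
                    exact hxm)
              exact Relation.ReflTransGen.tail hb hstepR
            · have hxe : x (m + 1) = X' + 1 := by
                have := hx (m + 1) (by omega) (le_refl _)
                omega
              have hb := ihX (w * Equiv.swap (⟨P, hPn⟩ : Fin n) (⟨P + 1, hP1⟩ : Fin n)) hfix' hX'
                (fun ℓ => if ℓ = m + 1 then X' else x ℓ)
                (fun ℓ h2 hl => by
                  rcases Nat.lt_or_ge ℓ (m + 1) with hlt | hge
                  · rw [hpres ℓ (by omega)]
                    simp only [show ℓ ≠ m + 1 by omega, if_false]
                    exact hx ℓ h2 (by omega)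
                  · have he : ℓ = m + 1 := by omega
                    subst he
                    rw [hX']
                    simp)
              have hOid : Omega n (m + 1) x
                  = Omega n (m + 1) (fun ℓ => if ℓ = m + 1 then X' else x ℓ)
                    * Equiv.swap (⟨P, hPn⟩ : Fin n) (⟨P + 1, hP1⟩ : Fin n) := by
                rw [Omega_succ n m hm1 x, Omega_succ n m hm1 _, hxe]
                have hxx' : Omega n m x = Omega n m (fun ℓ => if ℓ = m + 1 then X' else x ℓ) :=
                  Omega_congr n m _ _ (fun ℓ h2 hl => by
                    simp only [show ℓ ≠ m + 1 by omega, if_false])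
                have hux' : (fun ℓ => if ℓ = m + 1 then X' else x ℓ) (m + 1) = X' := by simp
                rw [if_pos (rfl : m + 1 = m + 1), uPerm_succ]
                have hidx : m + 1 - 1 - X' = P + 1 := by omega
                rw [hidx, sT_eq n P hP1, hxx', mul_assoc]
              rcases Llem hb (show (((⟨P, hPn⟩ : Fin n) : Fin n) : ℕ) + 1 = (((⟨P + 1, hP1⟩ : Fin n) : Fin n) : ℕ) from rfl)
                with hc | hc
              · rw [hOid]
                exact Relation.ReflTransGen.tail hc hstepR
              · rw [hOid]
                rw [hww] at hc
                exact hc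
        exact inner (invTop n w (m + 1)) w hfix rfl x hx

end St8

/-- The dimension pairs of an `h`-permissible filling `w` form a subset of the
inversions of `w`; consequently, with `x_ℓ` the number of dimension pairs with
top part `ℓ`, the associated permutation `ω(x)` is Bruhat-less than or equal
to `w`. -/


theorem stmt8 (n : ℕ) [NeZero n] (h : ℕ → ℕ)
    (hH1 : ∀ i, 1 ≤ i → i ≤ n → i ≤ h i ∧ h i ≤ n)
    (hH2 : ∀ i, 1 ≤ i → i + 1 ≤ n → h i ≤ h (i + 1))
    (w : Equiv.Perm (Fin n)) (hperm : IsPermissible n h w) :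
    (∀ a b : Fin n, DimPair n h w a b → a < b ∧ w⁻¹ b < w⁻¹ a) ∧
    bruhatLE n
      (omegaPerm n (fun ℓ =>
        Set.ncard {p : Fin n × Fin n | DimPair n h w p.1 p.2 ∧ (p.2 : ℕ) + 1 = ℓ}))
      w := by
  constructor
  · exact fun a b hd => ⟨hd.1, hd.2.1⟩
  · have hx : ∀ ℓ, 2 ≤ ℓ → ℓ ≤ n →
        Set.ncard {p : Fin n × Fin n | DimPair n h w p.1 p.2 ∧ (p.2 : ℕ) + 1 = ℓ}
          ≤ St8.invTop n w ℓ := by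
      intro ℓ _ _
      have hsub : {p : Fin n × Fin n | DimPair n h w p.1 p.2 ∧ (p.2 : ℕ) + 1 = ℓ} ⊆
          ↑(Finset.univ.filter (fun p : Fin n × Fin n =>
            p.1 < p.2 ∧ w⁻¹ p.2 < w⁻¹ p.1 ∧ (p.2 : ℕ) + 1 = ℓ)) := by
        rintro ⟨a, b⟩ ⟨hd, hb⟩
        simp only [Finset.coe_filter, Set.mem_setOf_eq, Finset.mem_univ, true_and]
        exact ⟨hd.1, hd.2.1, hb⟩
      calc Set.ncard {p : Fin n × Fin n | DimPair n h w p.1 p.2 ∧ (p.2 : ℕ) + 1 = ℓ}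
          ≤ Set.ncard (↑(Finset.univ.filter (fun p : Fin n × Fin n =>
              p.1 < p.2 ∧ w⁻¹ p.2 < w⁻¹ p.1 ∧ (p.2 : ℕ) + 1 = ℓ)) : Set (Fin n × Fin n)) :=
            Set.ncard_le_ncard hsub (Finset.finite_toSet _)
        _ = St8.invTop n w ℓ := by rw [Set.ncard_coe_finset]; rfl
    have hmain := St8.main n n w (fun p hp => absurd p.isLt (not_lt.mpr hp))
      (fun ℓ => Set.ncard {p : Fin n × Fin n | DimPair n h w p.1 p.2 ∧ (p.2 : ℕ) + 1 = ℓ})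
      hx
    rw [St8.Omega_n_eq] at hmain
    exact hmain
end

section
/- Let a ≥ 2, let w be the longest element of the parabolic subgroup of S_n generated by s_1,...,s_a (one-line notation (a+1, a, ..., 2, 1, a+2, ..., n)), and let u be the 312-type permutation with one-line notation (b, b+1, b-1, ..., 2, 1, b+2, ..., n) for some b ≥ 2. Then w ≤ u in Bruhat order if and only if b ≥ a + 1. -/
open Equiv Finset

/-- One-line notation (as a function of the 1-indexed position `i`) of the
312-type fixed point for the interval `[1, a]`:
`(a, a+1, a-1, a-2, …, 2, 1, a+2, a+3, …, n)`. -/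
def oneLine312 (a i : ℕ) : ℕ :=
  if i = 1 then a else if i = 2 then a + 1 else if i ≤ a + 1 then a + 2 - i else i

/-- One-line notation (as a function of the 1-indexed position `i`) of the
231-type fixed point for the interval `[1, a]`:
`(a+1, 1, a, a-1, …, 3, 2, a+2, …, n)`. -/
def oneLine231 (a i : ℕ) : ℕ :=
  if i = 1 then a + 1 else if i = 2 then 1 else if i ≤ a + 1 then a + 3 - i else i

/-- One-line notation (as a function of the 1-indexed position `i`) of the
longest element of the parabolic subgroup generated by `s_1, …, s_a`:
`(a+1, a, …, 2, 1, a+2, …, n)`. -/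
def oneLineInv (a i : ℕ) : ℕ := if i ≤ a + 1 then a + 2 - i else i

lemma swap_adj_mono (n : ℕ) (i j p q : Fin n) (hij : (i:ℕ)+1 = j) (hpq : p < q)
    (hne : ¬(p = i ∧ q = j)) : Equiv.swap i j p < Equiv.swap i j q := by
  simp only [Equiv.swap_apply_def]
  rw [Fin.lt_def] at hpq ⊢
  split_ifs <;> simp_all [Fin.ext_iff] <;> omega

lemma lenP_lt_adjacent (n : ℕ) (v : Equiv.Perm (Fin n)) (i j : Fin n)
    (hij : (i:ℕ)+1 = (j:ℕ)) (h : (v i : ℕ) < (v j : ℕ)) :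
    lenP n v < lenP n (v * Equiv.swap i j) := by
  classical
  set σ := Equiv.swap i j with hσ
  set S := univ.filter (fun p : Fin n × Fin n => p.1 < p.2 ∧ v p.2 < v p.1) with hS
  set T := univ.filter (fun p : Fin n × Fin n => p.1 < p.2 ∧ (v * σ) p.2 < (v * σ) p.1) with hT
  have hilt : i < j := by rw [Fin.lt_def]; omega
  have hijne : i ≠ j := Fin.ne_of_lt hilt
  have hmemT : (i, j) ∈ T := by
    simp only [hT, mem_filter, mem_univ, true_and]
    refine ⟨hilt, ?_⟩
    show v (σ j) < v (σ i)
    rw [hσ, Equiv.swap_apply_left, Equiv.swap_apply_right]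
    exact Fin.lt_def.mpr h
  have hmap : ∀ x ∈ S, (σ x.1, σ x.2) ∈ T.erase (i, j) := by
    rintro ⟨p, q⟩ hx
    simp only [hS, mem_filter, mem_univ, true_and] at hx
    obtain ⟨hpq, hinv⟩ := hx
    have hne : ¬(p = i ∧ q = j) := by
      rintro ⟨rfl, rfl⟩
      exact absurd (Fin.lt_def.mpr h) (not_lt.mpr hinv.le)
    refine Finset.mem_erase.mpr ⟨?_, ?_⟩
    · intro hEq
      have h1 : σ p = i := by exact congrArg Prod.fst hEq
      have h2 : σ q = j := by exact congrArg Prod.snd hEq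
      have hp : p = j := by
        have := congrArg σ h1
        rwa [hσ, Equiv.swap_apply_self, Equiv.swap_apply_left] at this
      have hq : q = i := by
        have := congrArg σ h2
        rwa [hσ, Equiv.swap_apply_self, Equiv.swap_apply_right] at this
      rw [hp, hq] at hpq
      exact absurd hpq (not_lt.mpr hilt.le)
    · simp only [hT, mem_filter, mem_univ, true_and]
      refine ⟨swap_adj_mono n i j p q hij hpq hne, ?_⟩
      show v (σ (σ q)) < v (σ (σ p))
      rw [hσ, Equiv.swap_apply_self, Equiv.swap_apply_self]
      exact hinv
  have hinj : Set.InjOn (fun x : Fin n × Fin n => (σ x.1, σ x.2)) S := by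
    intro x _ y _ hxy
    simp only [Prod.mk.injEq] at hxy
    exact Prod.ext (σ.injective hxy.1) (σ.injective hxy.2)
  calc S.card ≤ (T.erase (i, j)).card := Finset.card_le_card_of_injOn _ hmap hinj
    _ < T.card := Finset.card_lt_card (Finset.erase_ssubset hmemT)

def pFun (m p i : ℕ) : ℕ :=
  if i < p then m - i else if i = p then m + 1 else if i ≤ m + 1 then m + 1 - i else i

def isP (n m p : ℕ) (v : Equiv.Perm (Fin n)) : Prop := ∀ i : Fin n, (v i : ℕ) = pFun m p i

lemma stepP (n m p : ℕ) (v : Equiv.Perm (Fin n)) (hm : m + 2 ≤ n)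
    (hp1 : 1 ≤ p) (hpm : p ≤ m + 1) (hv : isP n m p v) :
    ∃ v', isP n m (p-1) v' ∧
      ((∃ i j : Fin n, i ≠ j ∧ v' = v * Equiv.swap i j) ∧ lenP n v < lenP n v') := by
  have hpn : p < n := by omega
  have hpn' : p - 1 < n := by omega
  set i : Fin n := ⟨p-1, hpn'⟩ with hi
  set j : Fin n := ⟨p, hpn⟩ with hj
  have hijne : i ≠ j := by simp [hi, hj, Fin.ext_iff]; omega
  have hvi : (v i : ℕ) = m - (p-1) := by
    rw [hv i]; simp only [pFun, hi]; split_ifs <;> omega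
  have hvj : (v j : ℕ) = m + 1 := by
    rw [hv j]; simp only [pFun, hj]; split_ifs <;> omega
  refine ⟨v * Equiv.swap i j, ?_, ⟨⟨i, j, hijne, rfl⟩, ?_⟩⟩
  · intro x
    show (v (Equiv.swap i j x) : ℕ) = _
    rcases eq_or_ne x i with rfl|hxi
    · rw [Equiv.swap_apply_left, hvj]
      simp only [pFun, hi]; split_ifs <;> omega
    · rcases eq_or_ne x j with rfl|hxj
      · rw [Equiv.swap_apply_right, hvi]
        simp only [pFun, hj]; split_ifs <;> omega
      · rw [Equiv.swap_apply_of_ne_of_ne hxi hxj, hv x]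
        have h1 : (x:ℕ) ≠ p - 1 := fun h => hxi (Fin.ext h)
        have h2 : (x:ℕ) ≠ p := fun h => hxj (Fin.ext h)
        simp only [pFun]; split_ifs <;> omega
  · exact lenP_lt_adjacent n v i j (by simp [hi, hj]; omega) (by omega)

lemma chain_p (n : ℕ) (m : ℕ) (hm : m + 2 ≤ n) :
    ∀ d p v, p + d ≤ m + 1 → isP n m (p + d) v →
      ∃ v', isP n m p v' ∧ bruhatLE n v v' := by
  intro d
  induction d with
  | zero => exact fun p v _ hv => ⟨v, hv, Relation.ReflTransGen.refl⟩
  | succ d ih =>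
      intro p v hle hv
      obtain ⟨v1, hv1, hs⟩ := stepP n m (p + d + 1) v hm (by omega) (by omega) hv
      have hv1' : isP n m (p + d) v1 := hv1
      obtain ⟨v', hv', hc⟩ := ih p v1 (by omega) hv1'
      exact ⟨v', hv', Relation.ReflTransGen.head hs hc⟩

lemma chain_m (n : ℕ) :
    ∀ e m v, m + e + 2 ≤ n → isP n m (m + 1) v →
      ∃ v', isP n (m + e) 1 v' ∧ bruhatLE n v v' := by
  intro e
  induction e with
  | zero =>
      intro m v hn hv
      have hv' : isP n m (1 + m) v := by rwa [Nat.add_comm]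
      exact chain_p n m (by omega) m 1 v (by omega) hv'
  | succ e ih =>
      intro m v hn hv
      have hv0 : isP n m (0 + (m+1)) v := by simpa using hv
      obtain ⟨v1, hv1, hc1⟩ := chain_p n m (by omega) (m+1) 0 v (by omega) hv0
      have hv1' : isP n (m+1) (m+2) v1 := by
        intro i; rw [hv1 i]; simp only [pFun]; split_ifs <;> omega
      obtain ⟨v', hv', hc2⟩ := ih (m+1) v1 (by omega) hv1'
      refine ⟨v', ?_, hc1.trans hc2⟩
      have : m + 1 + e = m + (e + 1) := by omega
      rwa [this] at hv'

lemma bruhat_len_le (n : ℕ) (u w : Equiv.Perm (Fin n)) (h : bruhatLE n u w) :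
    lenP n u ≤ lenP n w := by
  induction h with
  | refl => exact le_rfl
  | tail _ h ih => exact le_trans ih h.2.le


/-- Let `w` be the longest element of the parabolic subgroup of `S_n` generated
by `s_1, …, s_a` (one-line notation `(a+1, a, …, 2, 1, a+2, …, n)`) and let `u`
be the 312-type permutation with one-line notation
`(b, b+1, b-1, …, 2, 1, b+2, …, n)`.  Then `w ≤ u` in Bruhat order iff
`b ≥ a + 1`. -/
theorem stmt15 (n a b : ℕ) [NeZero n] (ha : 2 ≤ a) (hb : 2 ≤ b)
    (han : a + 1 ≤ n) (hbn : b + 1 ≤ n) (w u : Equiv.Perm (Fin n))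
    (hw : ∀ i : Fin n, (w i : ℕ) + 1 = oneLineInv a ((i : ℕ) + 1))
    (hu : ∀ i : Fin n, (u i : ℕ) + 1 = oneLine312 b ((i : ℕ) + 1)) :
    bruhatLE n w u ↔ a + 1 ≤ b := by
  classical
  have hw' : ∀ i : Fin n, (w i : ℕ) = if (i:ℕ) ≤ a then a - (i:ℕ) else (i:ℕ) := by
    intro i
    have h := hw i
    simp only [oneLineInv] at h
    split_ifs at h ⊢ <;> omega
  have hu' : ∀ i : Fin n, (u i : ℕ) =
      if (i:ℕ) = 0 then b - 1 else if (i:ℕ) = 1 then b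
      else if (i:ℕ) ≤ b then b - (i:ℕ) else (i:ℕ) := by
    intro i
    have h := hu i
    simp only [oneLine312] at h
    split_ifs at h ⊢ <;> omega
  constructor
  · -- forward: if bruhatLE then a + 1 ≤ b
    intro hle
    by_contra hab
    push_neg at hab
    have hba : b ≤ a := by omega
    -- show lenP u < lenP w
    have h0n : 0 < n := by omega
    have h1n : 1 < n := by omega
    have hssub : (univ.filter (fun p : Fin n × Fin n => p.1 < p.2 ∧ u p.2 < u p.1)) ⊂
        (univ.filter (fun p : Fin n × Fin n => p.1 < p.2 ∧ w p.2 < w p.1)) := by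
      constructor
      · rintro ⟨p, q⟩ hx
        simp only [mem_filter, mem_univ, true_and] at hx ⊢
        obtain ⟨hpq, hinv⟩ := hx
        rw [Fin.lt_def] at hpq
        rw [Fin.lt_def] at hinv
        rw [hu' p, hu' q] at hinv
        refine ⟨Fin.lt_def.mpr hpq, Fin.lt_def.mpr ?_⟩
        rw [hw' p, hw' q]
        split_ifs at hinv ⊢ <;> omega
      · intro hsub
        have hmem : ((⟨0, h0n⟩ : Fin n), (⟨1, h1n⟩ : Fin n)) ∈
            univ.filter (fun p : Fin n × Fin n => p.1 < p.2 ∧ w p.2 < w p.1) := by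
          simp only [mem_filter, mem_univ, true_and]
          constructor
          · rw [Fin.lt_def]; simp only [Fin.val_mk]; omega
          · rw [Fin.lt_def, hw' ⟨0, h0n⟩, hw' ⟨1, h1n⟩]
            simp only [Fin.val_mk]
            split_ifs <;> omega
        have := hsub hmem
        simp only [mem_filter, mem_univ, true_and] at this
        obtain ⟨-, h2⟩ := this
        rw [Fin.lt_def, hu' ⟨0, h0n⟩, hu' ⟨1, h1n⟩] at h2
        simp only [Fin.val_mk] at h2
        split_ifs at h2 <;> omega
    have hlt : lenP n u < lenP n w := Finset.card_lt_card hssub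
    have := bruhat_len_le n w u hle
    omega
  · -- backward: construct chain
    intro hab
    have hwP : isP n a (a + 1) w := by
      intro i
      rw [hw' i]
      simp only [pFun]
      split_ifs <;> omega
    obtain ⟨v', hv', hc⟩ := chain_m n (b - 1 - a) a w (by omega) hwP
    have hv'' : isP n (b - 1) 1 v' := by
      have : a + (b - 1 - a) = b - 1 := by omega
      rwa [this] at hv'
    have : v' = u := by
      apply Equiv.ext
      intro i
      apply Fin.ext
      rw [hv'' i, hu' i]
      simp only [pFun]
      split_ifs <;> omega
    rwa [this] at hc
end

section
/- Let a ≥ 2 and b ≥ 2, let v ∈ S_n have one-line notation (a+1, 1, a, a-1, ..., 3, 2, a+2, ..., n) (231-type) and u ∈ S_n have one-line notation (b, b+1, b-1, ..., 2, 1, b+2, ..., n) (312-type). Then v ≤ u in Bruhat order if and only if b ≥ a+1. -/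
open Equiv Finset

namespace Stmt16Aux

open Equiv Finset

variable {n : ℕ}

/-- Inversions of `w` with both positions in `P`. -/
def invOn (P : Fin n → Prop) [DecidablePred P] (w : Equiv.Perm (Fin n)) : ℕ :=
  (univ.filter (fun z : Fin n × Fin n => z.1 < z.2 ∧ P z.1 ∧ P z.2 ∧ w z.2 < w z.1)).card

/-- Injection from inversions of `w` to inversions of `w * swap p q` (missing `(p,q)`). -/
def G (w : Equiv.Perm (Fin n)) (p q : Fin n) (z : Fin n × Fin n) : Fin n × Fin n :=
  if z.2 = p ∧ ¬ w q < w z.1 then (z.1, q)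
  else if z.1 = q ∧ ¬ w z.2 < w p then (p, z.2)
  else z

/-- Left inverse of `G` on inversions. -/
def Hm (w : Equiv.Perm (Fin n)) (p q : Fin n) (z : Fin n × Fin n) : Fin n × Fin n :=
  if z.2 = p then z
  else if z.1 = p then (if w p < w z.2 then (q, z.2) else z)
  else if z.2 = q then (if z.1 < p ∧ w z.1 < w q then (z.1, p) else z)
  else z

theorem G_mem (w : Equiv.Perm (Fin n)) (p q : Fin n) (P : Fin n → Prop)
    (hpq : p < q) (hPp : P p) (hPq : P q) (hw : w p < w q) (z : Fin n × Fin n)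
    (h1 : z.1 < z.2) (h2 : P z.1) (h3 : P z.2) (h4 : w z.2 < w z.1) :
    (G w p q z).1 < (G w p q z).2 ∧ P (G w p q z).1 ∧ P (G w p q z).2 ∧
      (w * Equiv.swap p q) ((G w p q z).2) < (w * Equiv.swap p q) ((G w p q z).1) ∧
      G w p q z ≠ (p, q) := by
  obtain ⟨s, t⟩ := z
  simp only at h1 h2 h3 h4
  have hw' : ∀ x, (w * Equiv.swap p q) x = w (Equiv.swap p q x) := fun x => rfl
  unfold G
  simp only
  split_ifs with hA hB
  · obtain ⟨e2, hnq⟩ := hA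
    have hsp : s < p := e2 ▸ h1
    have hps : w p < w s := e2 ▸ h4
    have hsq : s < q := lt_trans hsp hpq
    refine ⟨hsq, h2, hPq, ?_, ?_⟩
    · rw [hw', hw', Equiv.swap_apply_right,
        Equiv.swap_apply_of_ne_of_ne (ne_of_lt hsp) (ne_of_lt hsq)]
      exact hps
    · intro hc
      exact (ne_of_lt hsp) (by simpa using congrArg Prod.fst hc)
  · obtain ⟨e1, hnp⟩ := hB
    have hqt : q < t := e1 ▸ h1
    have htq : w t < w q := e1 ▸ h4
    have hpt : p < t := lt_trans hpq hqt
    refine ⟨hpt, hPp, h3, ?_, ?_⟩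
    · rw [hw', hw', Equiv.swap_apply_left,
        Equiv.swap_apply_of_ne_of_ne (ne_of_gt hpt) (ne_of_gt hqt)]
      exact htq
    · intro hc
      exact (ne_of_gt hqt) (by simpa using congrArg Prod.snd hc)
  · push_neg at hA hB
    refine ⟨h1, h2, h3, ?_, ?_⟩
    · rw [hw', hw']
      by_cases e1p : s = p
      · have h2q : t ≠ q := by
          intro h
          rw [e1p] at h4
          rw [h] at h4
          exact absurd hw (asymm h4)
        have h2p : t ≠ p := by rw [← e1p]; exact ne_of_gt h1
        rw [e1p, Equiv.swap_apply_left, Equiv.swap_apply_of_ne_of_ne h2p h2q]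
        have : w t < w p := e1p ▸ h4
        exact lt_trans this hw
      · by_cases e1q : s = q
        · have h2p : t ≠ p := ne_of_gt (lt_trans hpq (e1q ▸ h1))
          have h2q : t ≠ q := by rw [← e1q]; exact ne_of_gt h1
          rw [e1q, Equiv.swap_apply_right, Equiv.swap_apply_of_ne_of_ne h2p h2q]
          exact hB e1q
        · rw [Equiv.swap_apply_of_ne_of_ne e1p e1q]
          by_cases e2p : t = p
          · rw [e2p, Equiv.swap_apply_left]
            exact hA e2p
          · by_cases e2q : t = q
            · rw [e2q, Equiv.swap_apply_right]
              have : w q < w s := e2q ▸ h4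
              exact lt_trans hw this
            · rw [Equiv.swap_apply_of_ne_of_ne e2p e2q]; exact h4
    · intro hc
      have hs : s = p := by simpa using congrArg Prod.fst hc
      have ht : t = q := by simpa using congrArg Prod.snd hc
      rw [hs, ht] at h4
      exact absurd hw (asymm h4)

theorem Hm_G (w : Equiv.Perm (Fin n)) (p q : Fin n) (hpq : p < q) (hw : w p < w q)
    (z : Fin n × Fin n) (h1 : z.1 < z.2) (h4 : w z.2 < w z.1) :
    Hm w p q (G w p q z) = z := by
  obtain ⟨s, t⟩ := z
  simp only at h1 h4
  unfold G
  simp only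
  split_ifs with hA hB
  · obtain ⟨e2, hnq⟩ := hA
    have hsp : s < p := e2 ▸ h1
    have hsq : s ≠ q := ne_of_lt (lt_trans hsp hpq)
    have hwsq : w s < w q := by
      rcases lt_trichotomy (w s) (w q) with h | h | h
      · exact h
      · exact absurd (w.injective h) hsq
      · exact absurd h hnq
    simp [Hm, ne_of_gt hpq, ne_of_lt hsp, hsp, hwsq, e2]
  · obtain ⟨e1, hnp⟩ := hB
    have hqt : q < t := e1 ▸ h1
    have htp : t ≠ p := ne_of_gt (lt_trans hpq hqt)
    have hwpt : w p < w t := by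
      rcases lt_trichotomy (w p) (w t) with h | h | h
      · exact h
      · exact absurd (w.injective h.symm) htp
      · exact absurd h hnp
    simp [Hm, htp, hwpt, e1]
  · push_neg at hA hB
    by_cases e2p : t = p
    · simp [Hm, e2p]
    · by_cases e1p : s = p
      · have hda : w t < w p := e1p ▸ h4
        simp [Hm, e2p, e1p, asymm hda]
      · by_cases e2q : t = q
        · have hdb : w q < w s := e2q ▸ h4
          simp [Hm, e2p, e1p, e2q, asymm hdb]
        · simp [Hm, e2p, e1p, e2q]

theorem key (P : Fin n → Prop) [DecidablePred P] (w : Equiv.Perm (Fin n)) (p q : Fin n)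
    (hpq : p < q) (hPp : P p) (hPq : P q) (hw : w p < w q) :
    invOn P w < invOn P (w * Equiv.swap p q) := by
  have hpqT : (p, q) ∈ univ.filter
      (fun z : Fin n × Fin n => z.1 < z.2 ∧ P z.1 ∧ P z.2 ∧
        (w * Equiv.swap p q) z.2 < (w * Equiv.swap p q) z.1) := by
    simp only [mem_filter, mem_univ, true_and]
    refine ⟨hpq, hPp, hPq, ?_⟩
    show w (Equiv.swap p q q) < w (Equiv.swap p q p)
    rw [Equiv.swap_apply_left, Equiv.swap_apply_right]
    exact hw
  have hcard : invOn P w ≤ (univ.filter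
      (fun z : Fin n × Fin n => z.1 < z.2 ∧ P z.1 ∧ P z.2 ∧
        (w * Equiv.swap p q) z.2 < (w * Equiv.swap p q) z.1)).card - 1 := by
    rw [← Finset.card_erase_of_mem hpqT]
    apply Finset.card_le_card_of_injOn (G w p q)
    · intro z hz
      simp only [mem_coe, coe_filter, Set.mem_setOf_eq, mem_filter, mem_univ, true_and] at hz
      obtain ⟨h1, h2, h3, h4⟩ := hz
      obtain ⟨g1, g2, g3, g4, g5⟩ := G_mem w p q P hpq hPp hPq hw z h1 h2 h3 h4
      refine Finset.mem_erase.mpr ⟨g5, ?_⟩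
      simp only [mem_filter, mem_univ, true_and]
      exact ⟨g1, g2, g3, g4⟩
    · intro z1 hz1 z2 hz2 he
      simp only [coe_filter, Set.mem_setOf_eq, mem_univ, true_and] at hz1 hz2
      rw [← Hm_G w p q hpq hw z1 hz1.1 hz1.2.2.2, ← Hm_G w p q hpq hw z2 hz2.1 hz2.2.2.2, he]
  have hTpos : 0 < (univ.filter
      (fun z : Fin n × Fin n => z.1 < z.2 ∧ P z.1 ∧ P z.2 ∧
        (w * Equiv.swap p q) z.2 < (w * Equiv.swap p q) z.1)).card :=
    Finset.card_pos.mpr ⟨_, hpqT⟩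
  unfold invOn at *
  omega

theorem lenP_eq (w : Equiv.Perm (Fin n)) : lenP n w = invOn (fun _ => True) w := by
  unfold lenP invOn
  congr 1
  apply Finset.filter_congr
  intro x _
  tauto

theorem lenP_lt (w : Equiv.Perm (Fin n)) (p q : Fin n) (hpq : p < q) (hw : w p < w q) :
    lenP n w < lenP n (w * Equiv.swap p q) := by
  rw [lenP_eq, lenP_eq]
  exact key (fun _ => True) w p q hpq trivial trivial hw

theorem ascent_of_len_lt (x : Equiv.Perm (Fin n)) (i j : Fin n) (hij : i < j)
    (hlen : lenP n x < lenP n (x * Equiv.swap i j)) : x i < x j := by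
  rcases lt_trichotomy (x i) (x j) with h | h | h
  · exact h
  · exact absurd (x.injective h) (ne_of_lt hij)
  · exfalso
    have h2 : (x * Equiv.swap i j) i < (x * Equiv.swap i j) j := by
      show x (Equiv.swap i j i) < x (Equiv.swap i j j)
      rw [Equiv.swap_apply_left, Equiv.swap_apply_right]
      exact h
    have := lenP_lt (x * Equiv.swap i j) i j hij h2
    rw [mul_assoc, Equiv.swap_mul_self, mul_one] at this
    omega

theorem step_zero [NeZero n] {x y : Equiv.Perm (Fin n)}
    (hstep : (∃ i j : Fin n, i ≠ j ∧ y = x * Equiv.swap i j) ∧ lenP n x < lenP n y) :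
    x 0 ≤ y 0 := by
  obtain ⟨⟨i, j, hij, rfl⟩, hlen⟩ := hstep
  have main : ∀ i j : Fin n, i < j → lenP n x < lenP n (x * Equiv.swap i j) →
      x 0 ≤ (x * Equiv.swap i j) 0 := by
    intro i j hij hlen
    have hx := ascent_of_len_lt x i j hij hlen
    have h0j : (0 : Fin n) ≠ j := by
      intro h
      rw [← h] at hij
      exact absurd hij (by simp [Fin.lt_def])
    show x 0 ≤ x (Equiv.swap i j 0)
    rcases eq_or_ne (0 : Fin n) i with h0 | h0
    · rw [← h0] at hx ⊢
      rw [Equiv.swap_apply_left]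
      exact le_of_lt hx
    · rw [Equiv.swap_apply_of_ne_of_ne h0 h0j]
  rcases lt_trichotomy i j with h | h | h
  · exact main i j h hlen
  · exact absurd h hij
  · rw [Equiv.swap_comm] at hlen ⊢
    exact main j i h hlen

theorem mono_zero [NeZero n] {x y : Equiv.Perm (Fin n)} (h : bruhatLE n x y) :
    x 0 ≤ y 0 := by
  induction h with
  | refl => exact le_refl _
  | tail _ hstep ih => exact le_trans ih (step_zero hstep)

theorem eq_of_decr (P : Fin n → Prop) (w w' : Equiv.Perm (Fin n))
    (hoff : ∀ x, ¬ P x → w x = w' x)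
    (hdw : ∀ s t : Fin n, P s → P t → s < t → w t < w s)
    (hdw' : ∀ s t : Fin n, P s → P t → s < t → w' t < w' s) : w = w' := by
  classical
  by_contra hne
  have hD : (univ.filter fun x => w x ≠ w' x).Nonempty := by
    by_contra h
    rw [Finset.not_nonempty_iff_eq_empty, Finset.filter_eq_empty_iff] at h
    exact hne (Equiv.ext (fun x => not_not.mp (h (mem_univ x))))
  obtain ⟨x0, hx0D, hx0max⟩ := Finset.exists_max_image _ w hD
  simp only [mem_filter, mem_univ, true_and] at hx0D
  have hPx0 : P x0 := by
    by_contra h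
    exact hx0D (hoff x0 h)
  have hmem : ∀ x : Fin n, w x ≠ w' x → P x ∧ w x ≤ w x0 := by
    intro x hx
    refine ⟨?_, hx0max x (by simp [hx])⟩
    by_contra h
    exact hx (hoff x h)
  have h1 : w' x0 < w x0 := by
    have hwz : w (w⁻¹ (w' x0)) = w' x0 := Equiv.apply_symm_apply w _
    by_cases hzD : w (w⁻¹ (w' x0)) = w' (w⁻¹ (w' x0))
    · exfalso
      have h2 : w' (w⁻¹ (w' x0)) = w' x0 := by rw [← hzD, hwz]
      have hz0 : w⁻¹ (w' x0) = x0 := w'.injective h2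
      rw [hz0] at hwz
      exact hx0D hwz
    · have hle := (hmem _ hzD).2
      rw [hwz] at hle
      rcases lt_or_eq_of_le hle with h | h
      · exact h
      · exact absurd h.symm hx0D
  have hw'y : w' (w'⁻¹ (w x0)) = w x0 := Equiv.apply_symm_apply w' _
  have hyD : w (w'⁻¹ (w x0)) ≠ w' (w'⁻¹ (w x0)) := by
    intro h
    rw [hw'y] at h
    have hy0 : w'⁻¹ (w x0) = x0 := w.injective h
    rw [hy0] at hw'y
    exact hx0D hw'y.symm
  have hyx0 : w'⁻¹ (w x0) ≠ x0 := by
    intro h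
    rw [h] at hw'y
    exact hx0D hw'y.symm
  obtain ⟨hPy, hwy⟩ := hmem _ hyD
  rcases lt_trichotomy (w'⁻¹ (w x0)) x0 with hlt | heq | hgt
  · have hcon := hdw _ x0 hPy hPx0 hlt
    exact absurd hcon (not_lt.mpr hwy)
  · exact hyx0 heq
  · have hcon := hdw' x0 _ hPx0 hPy hgt
    rw [hw'y] at hcon
    exact absurd hcon (asymm h1)

theorem sortLe (P : Fin n → Prop) [DecidablePred P] (w' : Equiv.Perm (Fin n))
    (hdec : ∀ s t : Fin n, P s → P t → s < t → w' t < w' s) :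
    ∀ (k : ℕ) (w : Equiv.Perm (Fin n)), (∀ x, ¬ P x → w x = w' x) →
      (univ.filter (fun z : Fin n × Fin n => z.1 < z.2 ∧ P z.1 ∧ P z.2)).card ≤ invOn P w + k →
      bruhatLE n w w' := by
  intro k
  induction k with
  | zero =>
    intro w hoff hk
    have hnoasc : ∀ s t : Fin n, P s → P t → s < t → w t < w s := by
      intro s t hPs hPt hst
      have hsub : (univ.filter (fun z : Fin n × Fin n => z.1 < z.2 ∧ P z.1 ∧ P z.2 ∧ w z.2 < w z.1))
          ⊆ (univ.filter (fun z : Fin n × Fin n => z.1 < z.2 ∧ P z.1 ∧ P z.2)) := by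
        intro z hz
        simp only [mem_filter, mem_univ, true_and] at hz ⊢
        exact ⟨hz.1, hz.2.1, hz.2.2.1⟩
      have heq := Finset.eq_of_subset_of_card_le hsub (by unfold invOn at hk; omega)
      have hmem : (s, t) ∈ (univ.filter (fun z : Fin n × Fin n => z.1 < z.2 ∧ P z.1 ∧ P z.2)) := by
        simp only [mem_filter, mem_univ, true_and]
        exact ⟨hst, hPs, hPt⟩
      rw [← heq] at hmem
      simp only [mem_filter, mem_univ, true_and] at hmem
      exact hmem.2.2.2
    rw [eq_of_decr P w w' hoff hnoasc hdec]
    exact Relation.ReflTransGen.refl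
  | succ k ih =>
    intro w hoff hk
    by_cases hasc : ∃ z : Fin n × Fin n, z.1 < z.2 ∧ P z.1 ∧ P z.2 ∧ w z.1 < w z.2
    · obtain ⟨⟨s, t⟩, hst, hPs, hPt, hwst⟩ := hasc
      simp only at hst hPs hPt hwst
      have hkey := key P w s t hst hPs hPt hwst
      have hoff1 : ∀ x, ¬ P x → (w * Equiv.swap s t) x = w' x := by
        intro x hx
        have hxs : x ≠ s := fun h => hx (h ▸ hPs)
        have hxt : x ≠ t := fun h => hx (h ▸ hPt)
        show w (Equiv.swap s t x) = w' x
        rw [Equiv.swap_apply_of_ne_of_ne hxs hxt]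
        exact hoff x hx
      refine Relation.ReflTransGen.head ?_ (ih (w * Equiv.swap s t) hoff1 (by omega))
      exact ⟨⟨s, t, ne_of_lt hst, rfl⟩, lenP_lt w s t hst hwst⟩
    · push_neg at hasc
      have hnoasc : ∀ s t : Fin n, P s → P t → s < t → w t < w s := by
        intro s t hPs hPt hst
        have hle := hasc (s, t) hst hPs hPt
        simp only at hle
        exact lt_of_le_of_ne hle (fun h => (ne_of_gt hst) (w.injective h))
      rw [eq_of_decr P w w' hoff hnoasc hdec]
      exact Relation.ReflTransGen.refl

end Stmt16Aux

/-- Let `v` be the 231-type permutation with one-line notation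
`(a+1, 1, a, a-1, …, 3, 2, a+2, …, n)` and `u` the 312-type permutation with
one-line notation `(b, b+1, b-1, …, 2, 1, b+2, …, n)`.  Then `v ≤ u` in Bruhat
order iff `b ≥ a + 1`. -/
theorem stmt16 (n a b : ℕ) [NeZero n] (ha : 2 ≤ a) (hb : 2 ≤ b)
    (han : a + 1 ≤ n) (hbn : b + 1 ≤ n) (v u : Equiv.Perm (Fin n))
    (hv : ∀ i : Fin n, (v i : ℕ) + 1 = oneLine231 a ((i : ℕ) + 1))
    (hu : ∀ i : Fin n, (u i : ℕ) + 1 = oneLine312 b ((i : ℕ) + 1)) :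
    bruhatLE n v u ↔ a + 1 ≤ b := by
  have hz : ((0 : Fin n) : ℕ) = 0 := Fin.val_zero n
  have hv0 : (v 0 : ℕ) + 1 = a + 1 := by
    have h := hv 0
    rw [hz] at h
    simpa [oneLine231] using h
  have hu0 : (u 0 : ℕ) + 1 = b := by
    have h := hu 0
    rw [hz] at h
    simpa [oneLine312] using h
  have hvbig : ∀ x : Fin n, a < (x : ℕ) → v x = x := by
    intro x hx
    have h := hv x
    simp only [oneLine231] at h
    rw [if_neg (by omega), if_neg (by omega), if_neg (by omega)] at h
    exact Fin.ext (by omega)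
  have hubig : ∀ x : Fin n, b < (x : ℕ) → u x = x := by
    intro x hx
    have h := hu x
    simp only [oneLine312] at h
    rw [if_neg (by omega), if_neg (by omega), if_neg (by omega)] at h
    exact Fin.ext (by omega)
  constructor
  · intro h
    have hm := Stmt16Aux.mono_zero h
    rw [Fin.le_def] at hm
    omega
  · intro hab
    set P : Fin n → Prop := fun x => 1 ≤ (x : ℕ) ∧ (x : ℕ) ≤ b with hP
    have hdec : ∀ s t : Fin n, P s → P t → s < t → u t < u s := by
      intro s t hPs hPt hst
      obtain ⟨hs1, hsb⟩ := hPs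
      obtain ⟨ht1, htb⟩ := hPt
      rw [Fin.lt_def] at hst ⊢
      have hus := hu s
      have hut := hu t
      simp only [oneLine312] at hus hut
      have ht2 : 2 ≤ (t : ℕ) := by omega
      rw [if_neg (by omega), if_neg (by omega), if_pos (by omega)] at hut
      by_cases hs2 : (s : ℕ) = 1
      · rw [if_neg (by omega), if_pos (by omega)] at hus
        omega
      · rw [if_neg (by omega), if_neg (by omega), if_pos (by omega)] at hus
        omega
    rcases eq_or_lt_of_le hab with hcase | hcase
    · -- b = a + 1 : sort directly
      refine Stmt16Aux.sortLe P u hdec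
        ((univ.filter (fun z : Fin n × Fin n => z.1 < z.2 ∧ P z.1 ∧ P z.2)).card) v ?_
        (Nat.le_add_left _ _)
      intro x hx
      simp only [hP, not_and, not_le] at hx
      by_cases hx0 : (x : ℕ) = 0
      · have hxe : x = 0 := Fin.ext (by omega)
        subst hxe
        exact Fin.ext (by omega)
      · have hxb : b < (x : ℕ) := by omega
        rw [hvbig x (by omega), hubig x hxb]
    · -- b ≥ a + 2 : one extra step first
      have hbn2 : b - 1 < n := by omega
      set j : Fin n := ⟨b - 1, hbn2⟩ with hj
      have hvj : v j = j := hvbig j (by simp [hj]; omega)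
      have h0j : (0 : Fin n) < j := by rw [Fin.lt_def, hz]; simp [hj]; omega
      have hv0j : v 0 < v j := by
        rw [Fin.lt_def, hvj]
        simp only [hj]
        omega
      refine Relation.ReflTransGen.head
        ⟨⟨0, j, ne_of_lt h0j, rfl⟩, Stmt16Aux.lenP_lt v 0 j h0j hv0j⟩ ?_
      refine Stmt16Aux.sortLe P u hdec
        ((univ.filter (fun z : Fin n × Fin n => z.1 < z.2 ∧ P z.1 ∧ P z.2)).card)
        (v * Equiv.swap 0 j) ?_ (Nat.le_add_left _ _)
      intro x hx
      simp only [hP, not_and, not_le] at hx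
      by_cases hx0 : (x : ℕ) = 0
      · have hxe : x = 0 := Fin.ext (by omega)
        subst hxe
        show v (Equiv.swap 0 j 0) = u 0
        rw [Equiv.swap_apply_left, hvj]
        exact Fin.ext (by simp [hj]; omega)
      · have hxb : b < (x : ℕ) := by omega
        have hxne0 : x ≠ 0 := fun h => hx0 (by rw [h, hz])
        have hxnej : x ≠ j := by
          intro h
          rw [h] at hxb
          simp [hj] at hxb
          omega
        show v (Equiv.swap 0 j x) = u x
        rw [Equiv.swap_apply_of_ne_of_ne hxne0 hxnej, hvbig x (by omega), hubig x hxb]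
end
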